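/- arXiv:2603.00914 — 3 statements merged into one kernel-verified Lean document; each statement's English description precedes it below -/
import Mathlib

section
/- Let k ≥ 4 and suppose L_1 < r and r ≤ L_i for every i ∈ {2,…,k}. Then the model graph (G_k)_{r,L} has exactly k² + k − 2 vertices, exactly 2k² − 4k + 2 edges, and is connected; consequently e((G_k)_{r,L}) − v((G_k)_{r,L}) + c((G_k)_{r,L}) = k² − 5k + 5. -/
/-- A pair `(x,y)` is a vertex of the model graph `(G_k)_{r,L}`. -/
def IsModelVertex (k : ℕ) (r : ℝ) (L : ℕ → ℝ) (p : ℕ × ℕ) : Prop :=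
  p.1 ≤ k ∧ p.2 ≤ k ∧ p.1 ≠ p.2 ∧ r ≤ L p.1 + L p.2

/-- The vertex type of the model graph `(G_k)_{r,L}`. -/
def ModelVertex (k : ℕ) (r : ℝ) (L : ℕ → ℝ) : Type :=
  {p : ℕ × ℕ // IsModelVertex k r L p}

/-- The adjacency relation of the model graph `(G_k)_{r,L}`. -/
def ModelAdj (r : ℝ) (L : ℕ → ℝ) (a b : ℕ × ℕ) : Prop :=
  (a.1 = b.1 ∧ ((a.2 = 0 ∧ b.2 ≠ 0) ∨ (a.2 ≠ 0 ∧ b.2 = 0)) ∧ r ≤ L a.1) ∨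
  (a.2 = b.2 ∧ ((a.1 = 0 ∧ b.1 ≠ 0) ∨ (a.1 ≠ 0 ∧ b.1 = 0)) ∧ r ≤ L a.2)

theorem ModelAdj.symm {r : ℝ} {L : ℕ → ℝ} {a b : ℕ × ℕ} (h : ModelAdj r L a b) :
    ModelAdj r L b a := by
  rcases h with ⟨h1, h2, h3⟩ | ⟨h1, h2, h3⟩
  · exact Or.inl ⟨h1.symm, by tauto, h1 ▸ h3⟩
  · exact Or.inr ⟨h1.symm, by tauto, h1 ▸ h3⟩

theorem ModelAdj.irrefl {r : ℝ} {L : ℕ → ℝ} {a : ℕ × ℕ} (h : ModelAdj r L a a) : False := by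
  rcases h with ⟨_, h2, _⟩ | ⟨_, h2, _⟩ <;> tauto

/-- The model graph `(G_k)_{r,L}`. -/
def modelGraph (k : ℕ) (r : ℝ) (L : ℕ → ℝ) : SimpleGraph (ModelVertex k r L) where
  Adj a b := ModelAdj r L a.val b.val
  symm := ⟨fun _ _ h => h.symm⟩
  loopless := ⟨fun _ h => h.irrefl⟩

section aux
variable {k : ℕ} {r : ℝ} {L : ℕ → ℝ}

lemma mem_vertex_iff (hL0 : L 0 = 0)
    (hLpos : ∀ i, 1 ≤ i → i ≤ k → 0 < L i) (hL1 : L 1 < r)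
    (hrL : ∀ i, 2 ≤ i → i ≤ k → r ≤ L i) (p : ℕ × ℕ) :
    IsModelVertex k r L p ↔ p.1 ≤ k ∧ p.2 ≤ k ∧ p.1 ≠ p.2 ∧ (2 ≤ p.1 ∨ 2 ≤ p.2) := by
  obtain ⟨a, b⟩ := p
  simp only [IsModelVertex]
  constructor
  · rintro ⟨h1, h2, h3, h4⟩
    refine ⟨h1, h2, h3, ?_⟩
    by_contra h
    push_neg at h
    obtain ⟨ha, hb⟩ := h
    simp at ha hb h3 ⊢
    interval_cases a <;> interval_cases b <;> simp_all [hL0] <;> linarith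
  · rintro ⟨h1, h2, h3, h4⟩
    refine ⟨h1, h2, h3, ?_⟩
    have hnonneg : ∀ i, i ≤ k → 0 ≤ L i := by
      intro i hi
      rcases Nat.eq_zero_or_pos i with rfl | hi1
      · simp [hL0]
      · exact (hLpos i hi1 hi).le
    rcases h4 with h4 | h4
    · have := hrL _ h4 h1; have := hnonneg _ h2; simp at *; linarith
    · have := hrL _ h4 h2; have := hnonneg _ h1; simp at *; linarith

/-- the vertex finset -/
def VS (k : ℕ) : Finset (ℕ × ℕ) :=
  ((Finset.range (k+1)) ×ˢ (Finset.range (k+1))).filter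
    (fun p => p.1 ≠ p.2 ∧ (2 ≤ p.1 ∨ 2 ≤ p.2))

lemma VS_card (hk : 4 ≤ k) : (VS k).card = k ^ 2 + k - 2 := by
  have hdiag : ∀ p : ℕ × ℕ, p ∈ (Finset.range (k+1)).image (fun i => (i, i)) ↔
      p.1 < k + 1 ∧ p.1 = p.2 := by
    rintro ⟨a, b⟩
    simp only [Finset.mem_image, Finset.mem_range, Prod.mk.injEq]
    constructor
    · rintro ⟨i, hi, rfl, rfl⟩; exact ⟨hi, rfl⟩
    · rintro ⟨h1, rfl⟩; exact ⟨a, h1, rfl, rfl⟩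
  set D : Finset (ℕ × ℕ) := ((Finset.range (k+1)).image (fun i => (i, i))) ∪ {(0,1),(1,0)} with hD
  have hsub : D ⊆ (Finset.range (k+1)) ×ˢ (Finset.range (k+1)) := by
    intro p hp
    simp only [hD, Finset.mem_union, Finset.mem_insert, Finset.mem_singleton, hdiag] at hp
    simp only [Finset.mem_product, Finset.mem_range]
    rcases hp with ⟨h1, h2⟩ | rfl | rfl
    · omega
    · constructor <;> omega
    · constructor <;> omega
  have hVS : VS k = ((Finset.range (k+1)) ×ˢ (Finset.range (k+1))) \ D := by
    ext ⟨a, b⟩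
    simp only [VS, Finset.mem_filter, Finset.mem_sdiff, Finset.mem_product, Finset.mem_range,
      hD, Finset.mem_union, Finset.mem_insert, Finset.mem_singleton, hdiag, Prod.mk.injEq]
    constructor
    · rintro ⟨⟨h1, h2⟩, h3, h4⟩
      exact ⟨⟨h1, h2⟩, by push_neg; refine ⟨fun _ => h3, ?_, ?_⟩ <;> omega⟩
    · rintro ⟨⟨h1, h2⟩, h⟩
      push_neg at h
      obtain ⟨hne, hx, hy⟩ := h
      refine ⟨⟨h1, h2⟩, fun hab => hne h1 hab, ?_⟩
      by_contra hc
      push_neg at hc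
      obtain ⟨ha, hb⟩ := hc
      have hab : a ≠ b := fun hab => hne h1 hab
      interval_cases a <;> interval_cases b <;> simp_all
  have hDcard : D.card = k + 3 := by
    rw [hD, Finset.card_union_of_disjoint, Finset.card_image_of_injective _
      (fun i j h => congrArg Prod.fst h)]
    · simp
    · rw [Finset.disjoint_left]
      intro p hp hq
      rw [hdiag] at hp
      simp only [Finset.mem_insert, Finset.mem_singleton] at hq
      rcases hq with rfl | rfl <;> simp at hp
  rw [hVS, Finset.card_sdiff_of_subset hsub, hDcard, Finset.card_product, Finset.card_range]
  have h2 : 2 ≤ k ^ 2 + k := by nlinarith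
  have h3 : k + 3 ≤ (k+1) * (k+1) := by nlinarith
  zify [h2, h3]
  ring

/-- symmetric labelling function on pairs -/
def gfun : ℕ × ℕ → ℕ × ℕ → ℕ × ℕ × ℕ := fun a b =>
  if a.1 = b.1 then (0, a.1, max a.2 b.2) else (1, max a.1 b.1, max a.2 b.2)

lemma gfun_symm (a b : ℕ × ℕ) : gfun a b = gfun b a := by
  unfold gfun
  rcases eq_or_ne a.1 b.1 with h | h
  · simp [h, Nat.max_comm]
  · simp [h, Ne.symm h, Nat.max_comm]

def glift : Sym2 (ℕ × ℕ) → ℕ × ℕ × ℕ := Sym2.lift ⟨gfun, gfun_symm⟩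

/-- inverse: a triple back to the unordered pair -/
def hfun : ℕ × ℕ × ℕ → Sym2 (ℕ × ℕ) := fun t =>
  if t.1 = 0 then s((t.2.1, 0), (t.2.1, t.2.2)) else s((0, t.2.2), (t.2.1, t.2.2))

/-- for adjacent pairs, hfun inverts glift -/
lemma hfun_glift (a b : ℕ × ℕ) (h : ModelAdj r L a b) : hfun (glift s(a, b)) = s(a, b) := by
  obtain ⟨a1, a2⟩ := a
  obtain ⟨b1, b2⟩ := b
  rcases h with ⟨h1, h2, h3⟩ | ⟨h1, h2, h3⟩ <;> simp_all [glift, gfun, hfun]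
  · rcases h2 with ⟨rfl, h2⟩ | ⟨h2, rfl⟩
    · simp [Nat.max_eq_right (Nat.zero_le _)]
    · simp [Nat.max_eq_left (Nat.zero_le _), Sym2.eq_swap]
  · have hne : a1 ≠ b1 := by rcases h2 with ⟨rfl, h⟩ | ⟨h, rfl⟩ <;> omega
    simp [hne]
    rcases h2 with ⟨rfl, h2⟩ | ⟨h2, rfl⟩
    · simp [Nat.max_eq_right (Nat.zero_le _), Sym2.eq_swap]
    · simp [Nat.max_eq_left (Nat.zero_le _)]

/-- the edge label finset -/
def ES (k : ℕ) : Finset (ℕ × ℕ × ℕ) :=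
  ({0} ×ˢ ((Finset.Icc 2 k ×ˢ Finset.Icc 1 k).filter fun p => p.1 ≠ p.2)) ∪
  ({1} ×ˢ ((Finset.Icc 1 k ×ˢ Finset.Icc 2 k).filter fun p => p.1 ≠ p.2))

lemma offdiag_card (A B : Finset ℕ) :
    ((A ×ˢ B).filter fun p => p.1 ≠ p.2).card = A.card * B.card - (A ∩ B).card := by
  have h : ((A ×ˢ B).filter fun p => p.1 ≠ p.2) =
      (A ×ˢ B) \ ((A ∩ B).image fun i => (i, i)) := by
    ext ⟨a, b⟩
    simp only [Finset.mem_filter, Finset.mem_sdiff, Finset.mem_product, Finset.mem_image,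
      Finset.mem_inter, Prod.mk.injEq]
    constructor
    · rintro ⟨⟨h1, h2⟩, h3⟩
      exact ⟨⟨h1, h2⟩, by rintro ⟨i, hi, rfl, rfl⟩; exact h3 rfl⟩
    · rintro ⟨⟨h1, h2⟩, h3⟩
      refine ⟨⟨h1, h2⟩, ?_⟩
      rintro rfl
      exact h3 ⟨a, ⟨h1, h2⟩, rfl, rfl⟩
  rw [h, Finset.card_sdiff_of_subset, Finset.card_image_of_injective _ (fun i j h => congrArg Prod.fst h),
    Finset.card_product]
  intro p hp
  simp only [Finset.mem_image, Finset.mem_inter] at hp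
  obtain ⟨i, ⟨h1, h2⟩, rfl⟩ := hp
  simp [Finset.mem_product, h1, h2]

lemma ES_card (hk : 4 ≤ k) : (ES k).card = 2 * k ^ 2 - 4 * k + 2 := by
  rw [ES, Finset.card_union_of_disjoint]
  · rw [Finset.card_product, Finset.card_product, Finset.card_singleton,
      offdiag_card, offdiag_card]
    have h1 : Finset.Icc 2 k ∩ Finset.Icc 1 k = Finset.Icc 2 k := by
      apply Finset.inter_eq_left.mpr
      intro x hx
      simp only [Finset.mem_Icc] at hx ⊢
      omega
    have h2 : Finset.Icc 1 k ∩ Finset.Icc 2 k = Finset.Icc 2 k := by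
      apply Finset.inter_eq_right.mpr
      intro x hx
      simp only [Finset.mem_Icc] at hx ⊢
      omega
    rw [h1, h2, Nat.card_Icc, Nat.card_Icc]
    have e1 : k + 1 - 2 = k - 1 := by omega
    have e2 : k + 1 - 1 = k := by omega
    rw [e1, e2]
    have h3 : k - 1 ≤ (k-1) * k := by nlinarith [Nat.sub_le k 1]
    have h4 : k - 1 ≤ k * (k-1) := by nlinarith [Nat.sub_le k 1]
    have h5 : 1 ≤ k := by omega
    have h6 : 4 * k ≤ 2 * k ^ 2 := by nlinarith
    simp only [Finset.card_singleton, one_mul]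
    zify [h3, h4, h5, h6]
    ring
  · rw [Finset.disjoint_left]
    intro p hp hq
    simp only [Finset.mem_product, Finset.mem_singleton] at hp hq
    omega

lemma glift_mem (hr : 0 < r) (hL0 : L 0 = 0) (hL1 : L 1 < r)
    (a b : ℕ × ℕ) (ha : IsModelVertex k r L a) (hb : IsModelVertex k r L b)
    (hadj : ModelAdj r L a b) : glift s(a, b) ∈ ES k := by
  obtain ⟨a1, a2⟩ := a
  obtain ⟨b1, b2⟩ := b
  obtain ⟨ha1, ha2, ha3, _⟩ := ha
  obtain ⟨hb1, hb2, hb3, _⟩ := hb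
  simp only at ha1 ha2 ha3 hb1 hb2 hb3
  rcases hadj with ⟨h1, h2, h3⟩ | ⟨h1, h2, h3⟩ <;> simp only at h1 h2 h3
  · subst h1
    have hL2 : 2 ≤ a1 := by
      by_contra hc
      interval_cases a1
      · rw [hL0] at h3; linarith
      · linarith
    rcases h2 with ⟨h20, h21⟩ | ⟨h20, h21⟩
    · subst h20
      have hg : glift s((a1, 0), (a1, b2)) = (0, a1, b2) := by
        simp [glift, gfun]
      rw [hg]
      simp only [ES, Finset.mem_union, Finset.mem_product, Finset.mem_singleton,
        Finset.mem_filter, Finset.mem_Icc]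
      left
      exact ⟨trivial, ⟨⟨hL2, ha1⟩, by omega, hb2⟩, by omega⟩
    · subst h21
      have hg : glift s((a1, a2), (a1, 0)) = (0, a1, a2) := by
        simp [glift, gfun]
      rw [hg]
      simp only [ES, Finset.mem_union, Finset.mem_product, Finset.mem_singleton,
        Finset.mem_filter, Finset.mem_Icc]
      left
      exact ⟨trivial, ⟨⟨hL2, ha1⟩, by omega, ha2⟩, by omega⟩
  · subst h1
    have hL2 : 2 ≤ a2 := by
      by_contra hc
      interval_cases a2
      · rw [hL0] at h3; linarith
      · linarith
    rcases h2 with ⟨h20, h21⟩ | ⟨h20, h21⟩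
    · subst h20
      have hne : (0 : ℕ) ≠ b1 := fun hh => h21 hh.symm
      have hg : glift s((0, a2), (b1, a2)) = (1, b1, a2) := by
        simp [glift, gfun, hne]
      rw [hg]
      simp only [ES, Finset.mem_union, Finset.mem_product, Finset.mem_singleton,
        Finset.mem_filter, Finset.mem_Icc]
      right
      exact ⟨trivial, ⟨⟨by omega, hb1⟩, hL2, ha2⟩, by omega⟩
    · subst h21
      have hne : a1 ≠ (0 : ℕ) := h20
      have hg : glift s((a1, a2), (0, a2)) = (1, a1, a2) := by
        simp [glift, gfun, hne]
      rw [hg]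
      simp only [ES, Finset.mem_union, Finset.mem_product, Finset.mem_singleton,
        Finset.mem_filter, Finset.mem_Icc]
      right
      exact ⟨trivial, ⟨⟨by omega, ha1⟩, hL2, ha2⟩, by omega⟩

lemma glift_surj (hL0 : L 0 = 0) (hLpos : ∀ i, 1 ≤ i → i ≤ k → 0 < L i)
    (hrL : ∀ i, 2 ≤ i → i ≤ k → r ≤ L i)
    (t : ℕ × ℕ × ℕ) (ht : t ∈ ES k) :
    ∃ a b : ℕ × ℕ, IsModelVertex k r L a ∧ IsModelVertex k r L b ∧
      ModelAdj r L a b ∧ glift s(a, b) = t := by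
  obtain ⟨e, x, y⟩ := t
  have hnonneg : ∀ i, i ≤ k → 0 ≤ L i := by
    intro i hi
    rcases Nat.eq_zero_or_pos i with rfl | hi1
    · simp [hL0]
    · exact (hLpos i hi1 hi).le
  simp only [ES, Finset.mem_union, Finset.mem_product, Finset.mem_singleton, Finset.mem_filter,
    Finset.mem_Icc] at ht
  rcases ht with ⟨rfl, ⟨⟨hx2, hxk⟩, hy1, hyk⟩, hxy⟩ | ⟨rfl, ⟨⟨hx1, hxk⟩, hy2, hyk⟩, hxy⟩
  · refine ⟨(x, 0), (x, y), ⟨hxk, by omega, by omega, ?_⟩, ⟨hxk, hyk, hxy, ?_⟩, ?_, ?_⟩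
    · rw [hL0]; have := hrL x hx2 hxk; linarith
    · have := hrL x hx2 hxk; have := hnonneg y hyk; linarith
    · exact Or.inl ⟨rfl, Or.inl ⟨rfl, by omega⟩, hrL x hx2 hxk⟩
    · simp [glift, gfun, Nat.max_eq_right (Nat.zero_le y)]
  · refine ⟨(0, y), (x, y), ⟨by omega, hyk, by omega, ?_⟩, ⟨hxk, hyk, hxy, ?_⟩, ?_, ?_⟩
    · rw [hL0]; have := hrL y hy2 hyk; linarith
    · have := hrL y hy2 hyk; have := hnonneg x hxk; linarith
    · exact Or.inr ⟨rfl, Or.inl ⟨rfl, by omega⟩, hrL y hy2 hyk⟩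
    · have hne : (0 : ℕ) ≠ x := by omega
      simp [glift, gfun, hne, Nat.max_eq_right (Nat.zero_le x)]

end aux

/-- if `4 ≤ k`, `L 1 < r` and `r ≤ L i` for all `i ∈ {2,…,k}`, then
`(G_k)_{r,L}` has `k² + k − 2` vertices, `2k² − 4k + 2` edges, is connected, and
`e − v + c = k² − 5k + 5`. -/
theorem model_counts_L1_small (k : ℕ) (hk : 4 ≤ k) (r : ℝ) (hr : 0 < r) (L : ℕ → ℝ)
    (hL0 : L 0 = 0) (hLpos : ∀ i, 1 ≤ i → i ≤ k → 0 < L i)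
    (hL1 : L 1 < r) (hrL : ∀ i, 2 ≤ i → i ≤ k → r ≤ L i) :
    Nat.card (ModelVertex k r L) = k ^ 2 + k - 2 ∧
    Nat.card (modelGraph k r L).edgeSet = 2 * k ^ 2 - 4 * k + 2 ∧
    (modelGraph k r L).Connected ∧
    (Nat.card (modelGraph k r L).edgeSet : ℤ) - (Nat.card (ModelVertex k r L) : ℤ)
      + (Nat.card (modelGraph k r L).ConnectedComponent : ℤ)
      = (k : ℤ) ^ 2 - 5 * (k : ℤ) + 5 := by
  set G := modelGraph k r L with hG
  -- vertex count
  have hvert : Nat.card (ModelVertex k r L) = k ^ 2 + k - 2 := by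
    have he : ModelVertex k r L ≃ {p : ℕ × ℕ // p ∈ VS k} :=
      Equiv.subtypeEquivRight (fun p => by
        rw [mem_vertex_iff hL0 hLpos hL1 hrL]
        simp only [VS, Finset.mem_filter, Finset.mem_product, Finset.mem_range]
        omega)
    rw [Nat.card_congr he, Nat.card_eq_fintype_card, Fintype.card_coe, VS_card hk]
  -- edge count
  have hedge : Nat.card G.edgeSet = 2 * k ^ 2 - 4 * k + 2 := by
    have hmemf : ∀ e : G.edgeSet, glift (Sym2.map Subtype.val e.val) ∈ ES k := by
      rintro ⟨e, he⟩
      induction e using Sym2.ind with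
      | _ u v =>
        rw [SimpleGraph.mem_edgeSet] at he
        exact glift_mem hr hL0 hL1 u.val v.val u.2 v.2 he
    let f : G.edgeSet → {t // t ∈ ES k} := fun e => ⟨glift (Sym2.map Subtype.val e.val), hmemf e⟩
    have hbij : Function.Bijective f := by
      constructor
      · rintro ⟨e1, he1⟩ ⟨e2, he2⟩ hfe
        have hval : glift (Sym2.map Subtype.val e1) = glift (Sym2.map Subtype.val e2) := by
          simpa [f] using congrArg Subtype.val hfe
        apply Subtype.ext
        apply Sym2.map.injective (Subtype.val_injective) (α := ModelVertex k r L)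
        induction e1 using Sym2.ind with
        | _ u v =>
          induction e2 using Sym2.ind with
          | _ w z =>
            rw [SimpleGraph.mem_edgeSet] at he1 he2
            have h1 := hfun_glift u.val v.val he1
            have h2 := hfun_glift w.val z.val he2
            simp only [Sym2.map_pair_eq] at hval ⊢
            change glift s(u.val, v.val) = glift s(w.val, z.val) at hval
            change s(u.val, v.val) = s(w.val, z.val)
            rw [← h1, ← h2, hval]
      · rintro ⟨t, ht⟩
        obtain ⟨a, b, ha, hb, hadj, hglift⟩ := glift_surj hL0 hLpos hrL t ht
        refine ⟨⟨s((⟨a, ha⟩ : ModelVertex k r L), ⟨b, hb⟩), ?_⟩, ?_⟩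
        · exact (SimpleGraph.mem_edgeSet (G := G) (v := (⟨a, ha⟩ : ModelVertex k r L)) (w := ⟨b, hb⟩)).mpr hadj
        · apply Subtype.ext
          exact hglift
    rw [Nat.card_congr (Equiv.ofBijective f hbij), Nat.card_eq_fintype_card, Fintype.card_coe,
      ES_card hk]
  -- connectivity
  have hVmk : ∀ x y : ℕ, x ≤ k → y ≤ k → x ≠ y → (2 ≤ x ∨ 2 ≤ y) → IsModelVertex k r L (x, y) := by
    intro x y h1 h2 h3 h4
    exact (mem_vertex_iff hL0 hLpos hL1 hrL (x, y)).mpr ⟨h1, h2, h3, h4⟩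
  have hvx0 : ∀ x, 2 ≤ x → x ≤ k → IsModelVertex k r L (x, 0) := by
    intro x h1 h2; exact hVmk x 0 h2 (by omega) (by omega) (by omega)
  have hv0y : ∀ y, 2 ≤ y → y ≤ k → IsModelVertex k r L (0, y) := by
    intro y h1 h2; exact hVmk 0 y (by omega) h2 (by omega) (by omega)
  -- adjacency helpers (as elements of G.Adj)
  have adjx0 : ∀ (x y : ℕ) (h1 : 2 ≤ x) (h2 : x ≤ k) (hy : y ≠ 0)
      (hv : IsModelVertex k r L (x, y)),
      G.Adj ⟨(x, 0), hvx0 x h1 h2⟩ ⟨(x, y), hv⟩ :=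
    fun x y h1 h2 hy _ => Or.inl ⟨rfl, Or.inl ⟨rfl, hy⟩, hrL x h1 h2⟩
  have adj0y : ∀ (x y : ℕ) (h1 : 2 ≤ y) (h2 : y ≤ k) (hx : x ≠ 0)
      (hv : IsModelVertex k r L (x, y)),
      G.Adj ⟨(0, y), hv0y y h1 h2⟩ ⟨(x, y), hv⟩ :=
    fun x y h1 h2 hx _ => Or.inr ⟨rfl, Or.inl ⟨rfl, hx⟩, hrL y h1 h2⟩
  -- (x,0) reaches (0,c) when x ≠ c, both in [2,k]
  have key : ∀ (x c : ℕ) (h1 : 2 ≤ x) (h2 : x ≤ k) (h3 : 2 ≤ c) (h4 : c ≤ k) (h5 : x ≠ c),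
      G.Reachable ⟨(x, 0), hvx0 x h1 h2⟩ ⟨(0, c), hv0y c h3 h4⟩ := by
    intro x c h1 h2 h3 h4 h5
    have hv : IsModelVertex k r L (x, c) := hVmk x c h2 h4 h5 (by omega)
    exact ((adjx0 x c h1 h2 (by omega) hv).reachable).trans
      ((adj0y x c h3 h4 (by omega) hv).reachable).symm
  -- hub: (x,0) reaches (y,0)
  have hub : ∀ (x y : ℕ) (h1 : 2 ≤ x) (h2 : x ≤ k) (h3 : 2 ≤ y) (h4 : y ≤ k),
      G.Reachable ⟨(x, 0), hvx0 x h1 h2⟩ ⟨(y, 0), hvx0 y h3 h4⟩ := by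
    intro x y h1 h2 h3 h4
    obtain ⟨c, hc1, hc2, hc3, hc4⟩ : ∃ c, 2 ≤ c ∧ c ≤ k ∧ x ≠ c ∧ y ≠ c := by
      by_cases h2' : x = 2 ∨ y = 2
      · by_cases h3' : x = 3 ∨ y = 3
        · exact ⟨4, by omega, by omega, by omega, by omega⟩
        · exact ⟨3, by omega, by omega, by omega, by omega⟩
      · exact ⟨2, by omega, by omega, by omega, by omega⟩
    exact (key x c h1 h2 hc1 hc2 hc3).trans (key y c h3 h4 hc1 hc2 hc4).symm
  -- root
  have h2k : 2 ≤ k := by omega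
  set ρ : ModelVertex k r L := ⟨(2, 0), hvx0 2 le_rfl h2k⟩ with hρ
  have main : ∀ v : ModelVertex k r L, G.Reachable ρ v := by
    rintro ⟨⟨a, b⟩, hv⟩
    obtain ⟨ha, hb, hab, h2ab⟩ := (mem_vertex_iff hL0 hLpos hL1 hrL (a, b)).mp hv
    simp only at ha hb hab h2ab
    rcases Nat.eq_zero_or_pos b with rfl | hbpos
    · -- b = 0, so 2 ≤ a
      have h2a : 2 ≤ a := by omega
      exact hub 2 a le_rfl h2k h2a ha
    rcases Nat.eq_zero_or_pos a with rfl | hapos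
    · -- a = 0, so 2 ≤ b
      have h2b : 2 ≤ b := by omega
      obtain ⟨c, hc1, hc2, hc3⟩ : ∃ c, 2 ≤ c ∧ c ≤ k ∧ c ≠ b := by
        by_cases hb2 : b = 2
        · exact ⟨3, by omega, by omega, by omega⟩
        · exact ⟨2, by omega, by omega, by omega⟩
      exact (hub 2 c le_rfl h2k hc1 hc2).trans (key c b hc1 hc2 h2b hb hc3)
    by_cases h2a : 2 ≤ a
    · -- a ≥ 2, b ≥ 1 : (a,b) - (a,0) - root
      exact (hub 2 a le_rfl h2k h2a ha).trans
        ((adjx0 a b h2a ha (by omega) hv).reachable)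
    · -- a = 1, b ≥ 2
      have ha1 : a = 1 := by omega
      subst ha1
      have h2b : 2 ≤ b := by omega
      obtain ⟨c, hc1, hc2, hc3⟩ : ∃ c, 2 ≤ c ∧ c ≤ k ∧ c ≠ b := by
        by_cases hb2 : b = 2
        · exact ⟨3, by omega, by omega, by omega⟩
        · exact ⟨2, by omega, by omega, by omega⟩
      exact ((hub 2 c le_rfl h2k hc1 hc2).trans (key c b hc1 hc2 h2b hb hc3)).trans
        ((adj0y 1 b h2b hb (by omega) hv).reachable)
  have hconn : G.Connected := by
    rw [SimpleGraph.connected_iff_exists_forall_reachable]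
    exact ⟨ρ, main⟩
  have hcomp : Nat.card G.ConnectedComponent = 1 := by
    rw [Nat.card_eq_one_iff_unique]
    exact ⟨hconn.preconnected.subsingleton_connectedComponent, ⟨G.connectedComponentMk ρ⟩⟩
  refine ⟨hvert, hedge, hconn, ?_⟩
  rw [hvert, hedge, hcomp]
  have h1 : 2 ≤ k ^ 2 + k := by nlinarith
  have h2 : 4 * k ≤ 2 * k ^ 2 := by nlinarith
  have e1 : ((2 * k ^ 2 - 4 * k + 2 : ℕ) : ℤ) = 2 * (k : ℤ) ^ 2 - 4 * k + 2 := by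
    zify [h2]
  have e2 : ((k ^ 2 + k - 2 : ℕ) : ℤ) = (k : ℤ) ^ 2 + k - 2 := by
    zify [h1]
  rw [e1, e2]
  push_cast
  ring
end

section
/- Let k ≥ 4 and suppose r ≤ L_1, L_k < r, and r ≤ L_i for every i ∈ {2,…,k−1}. Then the model graph (G_k)_{r,L} has exactly k² + k − 2 vertices, exactly 2(k−1)² edges, and is connected; consequently e((G_k)_{r,L}) − v((G_k)_{r,L}) + c((G_k)_{r,L}) = k² − 5k + 5. -/
open Finset in
private def modelVFin (k : ℕ) : Finset (ℕ × ℕ) :=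
  (range (k+1) ×ˢ range (k+1)) \
    ((range (k+1)).image (fun i => (i,i)) ∪ {((0:ℕ),k), (k,(0:ℕ))})

open Finset in
private lemma model_vset_eq (k : ℕ) (hk : 4 ≤ k) (r : ℝ) (hr : 0 < r) (L : ℕ → ℝ)
    (hL0 : L 0 = 0) (hLpos : ∀ i, 1 ≤ i → i ≤ k → 0 < L i)
    (hLk : L k < r) (hLge : ∀ i, 1 ≤ i → i ≤ k - 1 → r ≤ L i) :
    {p : ℕ × ℕ | IsModelVertex k r L p} = ↑(modelVFin k) := by
  ext ⟨x, y⟩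
  simp only [Set.mem_setOf_eq, IsModelVertex, modelVFin, coe_sdiff, Set.mem_diff,
    mem_coe, mem_sdiff, mem_product, mem_range, mem_union, mem_image, mem_insert,
    mem_singleton, Prod.mk.injEq, not_or, not_exists, not_and]
  constructor
  · rintro ⟨hx, hy, hxy, hsum⟩
    refine ⟨⟨by omega, by omega⟩, fun i _ h1 h2 => hxy (h1 ▸ h2), ?_, ?_⟩
    · rintro rfl rfl
      rw [hL0] at hsum; linarith
    · rintro rfl rfl
      rw [hL0] at hsum; linarith
  · rintro ⟨⟨hx, hy⟩, hdiag, h0k, hk0⟩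
    have hxy : x ≠ y := fun h => hdiag x (by omega) rfl h
    refine ⟨by omega, by omega, hxy, ?_⟩
    rcases Nat.eq_zero_or_pos x with rfl | hx1
    · have hyk : y ≤ k - 1 := by
        rcases Nat.lt_or_ge y k with h | h
        · omega
        · exact absurd (by omega) (h0k rfl)
      rw [hL0]; linarith [hLge y (by omega) hyk]
    · rcases Nat.eq_zero_or_pos y with rfl | hy1
      · have hxk : x ≤ k - 1 := by
          rcases Nat.lt_or_ge x k with h | h
          · omega
          · exact absurd rfl (hk0 (by omega))
        rw [hL0]; linarith [hLge x hx1 hxk]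
      · rcases Nat.lt_or_ge x k with h | h
        · have := hLge x hx1 (by omega)
          have := hLpos y hy1 (by omega)
          linarith
        · have := hLge y hy1 (by omega)
          have := hLpos x hx1 (by omega)
          linarith

open Finset in
private lemma model_vfin_card (k : ℕ) (hk : 4 ≤ k) : (modelVFin k).card = k ^ 2 + k - 2 := by
  have hsub : ((range (k+1)).image (fun i => (i,i)) ∪ {((0:ℕ),k), (k,(0:ℕ))}) ⊆
      range (k+1) ×ˢ range (k+1) := by
    intro p hp
    simp only [mem_union, mem_image, mem_range, mem_insert, mem_singleton] at hp
    rcases hp with ⟨i, hi, rfl⟩ | rfl | rfl <;> simp [mem_product] <;> omega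
  rw [modelVFin, card_sdiff_of_subset hsub, card_union_of_disjoint, card_image_of_injective,
    card_range, card_product, card_range]
  · have h2 : ({((0:ℕ),k), (k,(0:ℕ))} : Finset (ℕ × ℕ)).card = 2 := by
      rw [card_insert_of_notMem (by simp; omega), card_singleton]
    rw [h2]
    have h3 : 2 ≤ k ^ 2 + k := by nlinarith
    zify [h3, show k + 1 + 2 ≤ (k+1) * (k+1) by nlinarith]
    ring
  · intro a b h; simpa using (Prod.mk.injEq _ _ _ _ ▸ h).1
  · simp only [disjoint_insert_right, mem_image, mem_range, disjoint_singleton_right,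
      Prod.mk.injEq, not_exists, not_and]
    exact ⟨fun i _ h1 h2 => by omega, fun i _ h1 h2 => by omega⟩

open Finset in
private def modelEFin1 (k : ℕ) : Finset (Sym2 (ℕ × ℕ)) :=
  (((Icc 1 (k-1)) ×ˢ (Icc 1 k)).filter (fun p => p.1 ≠ p.2)).image
    (fun p => s((p.1, (0:ℕ)), (p.1, p.2)))

open Finset in
private def modelEFin2 (k : ℕ) : Finset (Sym2 (ℕ × ℕ)) :=
  (((Icc 1 k) ×ˢ (Icc 1 (k-1))).filter (fun p => p.1 ≠ p.2)).image
    (fun p => s(((0:ℕ), p.2), (p.1, p.2)))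

open Finset in
private lemma card_filter_ne (a b : ℕ) :
    (((Icc 1 a) ×ˢ (Icc 1 b)).filter (fun p => p.1 ≠ p.2)).card = a * b - min a b := by
  have h := Finset.card_filter_add_card_filter_not
    (s := (Icc 1 a) ×ˢ (Icc 1 b)) (p := fun p => p.1 ≠ p.2)
  have heq : ((Icc 1 a) ×ˢ (Icc 1 b)).filter (fun p => ¬ p.1 ≠ p.2)
      = (Icc 1 (min a b)).image (fun i => (i,i)) := by
    ext ⟨x, y⟩
    simp only [mem_filter, mem_product, mem_Icc, mem_image, Prod.mk.injEq, ne_eq, not_not]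
    constructor
    · rintro ⟨⟨h1, h2⟩, rfl⟩; exact ⟨x, by omega, rfl, rfl⟩
    · rintro ⟨i, hi, rfl, rfl⟩; omega
  rw [heq, card_image_of_injective _ (fun i j hij => by simpa using (Prod.mk.injEq _ _ _ _ ▸ hij).1),
    card_product] at h
  simp only [Nat.card_Icc, Nat.add_sub_cancel] at h
  omega

open Finset in
private lemma card_filter_ne' (k : ℕ) (hk : 4 ≤ k) :
    (((Icc 1 (k-1)) ×ˢ (Icc 1 k)).filter (fun p => p.1 ≠ p.2)).card = (k-1)^2 ∧
    (((Icc 1 k) ×ˢ (Icc 1 (k-1))).filter (fun p => p.1 ≠ p.2)).card = (k-1)^2 := by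
  obtain ⟨m, rfl⟩ : ∃ m, k = m + 1 := ⟨k - 1, by omega⟩
  rw [card_filter_ne, card_filter_ne]
  simp only [Nat.add_sub_cancel]
  constructor
  · rw [min_eq_left (by omega), Nat.mul_succ, Nat.add_sub_cancel, sq]
  · rw [min_eq_right (by omega), Nat.succ_mul, Nat.add_sub_cancel, sq]

open Finset in
private lemma modelEFin1_card (k : ℕ) (hk : 4 ≤ k) : (modelEFin1 k).card = (k-1)^2 := by
  rw [modelEFin1, card_image_of_injOn, (card_filter_ne' k hk).1]
  intro p hp q hq hpq
  simp only [coe_filter, Set.mem_setOf_eq, mem_product, mem_Icc] at hp hq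
  simp only [Sym2.eq_iff, Prod.mk.injEq] at hpq
  have : p.1 = q.1 ∧ p.2 = q.2 := by omega
  exact Prod.ext this.1 this.2

open Finset in
private lemma modelEFin2_card (k : ℕ) (hk : 4 ≤ k) : (modelEFin2 k).card = (k-1)^2 := by
  rw [modelEFin2, card_image_of_injOn, (card_filter_ne' k hk).2]
  intro p hp q hq hpq
  simp only [coe_filter, Set.mem_setOf_eq, mem_product, mem_Icc] at hp hq
  simp only [Sym2.eq_iff, Prod.mk.injEq] at hpq
  have : p.1 = q.1 ∧ p.2 = q.2 := by omega
  exact Prod.ext this.1 this.2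

open Finset in
private lemma modelEFin_disjoint (k : ℕ) (hk : 4 ≤ k) : Disjoint (modelEFin1 k) (modelEFin2 k) := by
  rw [Finset.disjoint_left]
  intro e h1 h2
  simp only [modelEFin1, modelEFin2, mem_image, mem_filter, mem_product, mem_Icc] at h1 h2
  obtain ⟨p, ⟨⟨hp1, hp2⟩, hpne⟩, rfl⟩ := h1
  obtain ⟨q, ⟨⟨hq1, hq2⟩, hqne⟩, he⟩ := h2
  simp only [Sym2.eq_iff, Prod.mk.injEq] at he
  omega

open Finset in
private lemma model_eset_eq (k : ℕ) (hk : 4 ≤ k) (r : ℝ) (hr : 0 < r) (L : ℕ → ℝ)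
    (hL0 : L 0 = 0) (hLpos : ∀ i, 1 ≤ i → i ≤ k → 0 < L i)
    (hLk : L k < r) (hLge : ∀ i, 1 ≤ i → i ≤ k - 1 → r ≤ L i) :
    Sym2.map (Subtype.val) '' (modelGraph k r L).edgeSet = ↑(modelEFin1 k ∪ modelEFin2 k) := by
  ext e
  simp only [Set.mem_image, coe_union, Set.mem_union, mem_coe]
  constructor
  · rintro ⟨s, hs, rfl⟩
    induction s using Sym2.ind with
    | _ a b =>
      replace hs : (modelGraph k r L).Adj a b := (SimpleGraph.mem_edgeSet _).mp hs
      obtain ⟨⟨x1, y1⟩, hx1k, hy1k, hne1, hsum1⟩ := a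
      obtain ⟨⟨x2, y2⟩, hx2k, hy2k, hne2, hsum2⟩ := b
      have hs' : ModelAdj r L (x1, y1) (x2, y2) := hs
      simp only [Sym2.map_pair_eq]
      rcases hs' with ⟨h1, h2, h3⟩ | ⟨h1, h2, h3⟩
      · left
        simp only at h1 h2 h3 hne1 hne2 hx1k hy1k hx2k hy2k
        have hx1pos : 1 ≤ x1 := by
          rcases Nat.eq_zero_or_pos x1 with rfl | h
          · rw [hL0] at h3; linarith
          · exact h
        have hx1lt : x1 ≤ k - 1 := by
          rcases Nat.lt_or_ge x1 k with h | h
          · omega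
          · have hx1e : x1 = k := by omega
            rw [hx1e] at h3; linarith
        simp only [modelEFin1, mem_image, mem_filter, mem_product, mem_Icc]
        rcases h2 with ⟨hy1, hy2⟩ | ⟨hy1, hy2⟩
        · refine ⟨(x1, y2), ⟨⟨⟨hx1pos, hx1lt⟩, by omega, hy2k⟩, by omega⟩, ?_⟩
          subst hy1 h1; rfl
        · refine ⟨(x1, y1), ⟨⟨⟨hx1pos, hx1lt⟩, by omega, hy1k⟩, by omega⟩, ?_⟩
          subst hy2 h1
          exact Sym2.eq_swap
      · right
        simp only at h1 h2 h3 hne1 hne2 hx1k hy1k hx2k hy2k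
        have hy1pos : 1 ≤ y1 := by
          rcases Nat.eq_zero_or_pos y1 with rfl | h
          · rw [hL0] at h3; linarith
          · exact h
        have hy1lt : y1 ≤ k - 1 := by
          rcases Nat.lt_or_ge y1 k with h | h
          · omega
          · have hy1e : y1 = k := by omega
            rw [hy1e] at h3; linarith
        simp only [modelEFin2, mem_image, mem_filter, mem_product, mem_Icc]
        rcases h2 with ⟨hx1, hx2⟩ | ⟨hx1, hx2⟩
        · refine ⟨(x2, y1), ⟨⟨⟨by omega, hx2k⟩, hy1pos, hy1lt⟩, by omega⟩, ?_⟩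
          subst hx1 h1; rfl
        · refine ⟨(x1, y1), ⟨⟨⟨by omega, hx1k⟩, hy1pos, hy1lt⟩, by omega⟩, ?_⟩
          subst hx2 h1
          exact Sym2.eq_swap
  · rintro (he | he)
    · simp only [modelEFin1, mem_image, mem_filter, mem_product, mem_Icc] at he
      obtain ⟨⟨x, y⟩, ⟨⟨⟨hx1, hx2⟩, hy1, hy2⟩, hne⟩, rfl⟩ := he
      have hLx : r ≤ L x := hLge x hx1 hx2
      have hLy : 0 < L y := hLpos y hy1 hy2
      refine ⟨s(⟨(x, 0), ⟨by omega, by omega, by omega, by rw [hL0]; linarith⟩⟩,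
        ⟨(x, y), ⟨by omega, hy2, hne, by linarith⟩⟩),
        ((modelGraph k r L).mem_edgeSet).mpr (show ModelAdj r L (x, 0) (x, y) from Or.inl ⟨rfl, Or.inl ⟨rfl, show ¬y = 0 by omega⟩, hLx⟩), rfl⟩
    · simp only [modelEFin2, mem_image, mem_filter, mem_product, mem_Icc] at he
      obtain ⟨⟨x, y⟩, ⟨⟨⟨hx1, hx2⟩, hy1, hy2⟩, hne⟩, rfl⟩ := he
      have hLy : r ≤ L y := hLge y hy1 hy2
      have hLx : 0 < L x := hLpos x hx1 hx2
      refine ⟨s(⟨(0, y), ⟨by omega, by omega, by omega, by rw [hL0]; linarith⟩⟩,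
        ⟨(x, y), ⟨hx2, by omega, hne, by linarith⟩⟩),
        ((modelGraph k r L).mem_edgeSet).mpr (show ModelAdj r L (0, y) (x, y) from Or.inr ⟨rfl, Or.inl ⟨rfl, show ¬x = 0 by omega⟩, hLy⟩), rfl⟩

private lemma model_connected (k : ℕ) (hk : 4 ≤ k) (r : ℝ) (hr : 0 < r) (L : ℕ → ℝ)
    (hL0 : L 0 = 0) (hLpos : ∀ i, 1 ≤ i → i ≤ k → 0 < L i)
    (hLk : L k < r) (hLge : ∀ i, 1 ≤ i → i ≤ k - 1 → r ≤ L i) :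
    (modelGraph k r L).Connected := by
  have hL1 : r ≤ L 1 := hLge 1 (by omega) (by omega)
  have hA1 : ∀ (a b : ℕ) (h1 : IsModelVertex k r L (a, 0)) (h2 : IsModelVertex k r L (a, b)),
      b ≠ 0 → r ≤ L a → (modelGraph k r L).Adj ⟨(a, 0), h1⟩ ⟨(a, b), h2⟩ :=
    fun a b h1 h2 hb hra => show ModelAdj r L (a, 0) (a, b) from Or.inl ⟨rfl, Or.inl ⟨rfl, hb⟩, hra⟩
  have hA2 : ∀ (a b : ℕ) (h1 : IsModelVertex k r L (0, b)) (h2 : IsModelVertex k r L (a, b)),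
      a ≠ 0 → r ≤ L b → (modelGraph k r L).Adj ⟨(0, b), h1⟩ ⟨(a, b), h2⟩ :=
    fun a b h1 h2 ha hrb => show ModelAdj r L (0, b) (a, b) from Or.inr ⟨rfl, Or.inl ⟨rfl, ha⟩, hrb⟩
  have hubmem : IsModelVertex k r L (1, 0) :=
    ⟨by omega, by omega, by omega, show r ≤ L 1 + L 0 by rw [hL0]; linarith⟩
  set hub : ModelVertex k r L := ⟨(1, 0), hubmem⟩ with hhub
  have claimA : ∀ a, 1 ≤ a → a ≤ k - 1 → ∀ hm : IsModelVertex k r L (a, 0),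
      (modelGraph k r L).Reachable hub ⟨(a, 0), hm⟩ := by
    intro a ha1 ha2 hm
    rcases eq_or_ne a 1 with rfl | hne
    · have : hub = ⟨(1, 0), hm⟩ := rfl
      rw [← this]
    · obtain ⟨b, hb1, hbk, hba, hbo⟩ : ∃ b, 1 ≤ b ∧ b ≤ k - 1 ∧ b ≠ a ∧ b ≠ 1 := by
        rcases eq_or_ne a 2 with rfl | h
        · exact ⟨3, by omega, by omega, by omega, by omega⟩
        · exact ⟨2, by omega, by omega, by omega, by omega⟩
      have hLb := hLge b hb1 hbk
      have hLa := hLge a ha1 ha2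
      have m1b : IsModelVertex k r L (1, b) :=
        ⟨by omega, by omega, by omega, show r ≤ L 1 + L b by linarith⟩
      have m0b : IsModelVertex k r L (0, b) :=
        ⟨by omega, by omega, by omega, show r ≤ L 0 + L b by rw [hL0]; linarith⟩
      have mab : IsModelVertex k r L (a, b) :=
        ⟨by omega, by omega, by omega, show r ≤ L a + L b by linarith⟩
      have s1 : (modelGraph k r L).Adj hub ⟨(1, b), m1b⟩ := hA1 1 b hubmem m1b (by omega) hL1
      have s2 := hA2 1 b m0b m1b (by omega) hLb
      have s3 := hA2 a b m0b mab (by omega) hLb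
      have s4 := hA1 a b hm mab (by omega) hLa
      exact s1.reachable.trans (s2.reachable.symm.trans (s3.reachable.trans s4.reachable.symm))
  have claimA' : ∀ b, 1 ≤ b → b ≤ k - 1 → ∀ hm : IsModelVertex k r L (0, b),
      (modelGraph k r L).Reachable hub ⟨(0, b), hm⟩ := by
    intro b hb1 hbk hm
    have hLb := hLge b hb1 hbk
    rcases eq_or_ne b 1 with rfl | hne
    · have hL2 := hLge 2 (by omega) (by omega)
      have m20 : IsModelVertex k r L (2, 0) :=
        ⟨by omega, by omega, by omega, show r ≤ L 2 + L 0 by rw [hL0]; linarith⟩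
      have m21 : IsModelVertex k r L (2, 1) :=
        ⟨by omega, by omega, by omega, show r ≤ L 2 + L 1 by linarith⟩
      have s5 := hA1 2 1 m20 m21 (by omega) hL2
      have s6 := hA2 2 1 hm m21 (by omega) hL1
      exact (claimA 2 (by omega) (by omega) m20).trans
        (s5.reachable.trans s6.reachable.symm)
    · have m1b : IsModelVertex k r L (1, b) :=
        ⟨by omega, by omega, by omega, show r ≤ L 1 + L b by linarith⟩
      have s1 : (modelGraph k r L).Adj hub ⟨(1, b), m1b⟩ := hA1 1 b hubmem m1b (by omega) hL1
      have s2 := hA2 1 b hm m1b (by omega) hLb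
      exact s1.reachable.trans s2.reachable.symm
  have main : ∀ v : ModelVertex k r L, (modelGraph k r L).Reachable hub v := by
    rintro ⟨⟨x, y⟩, hm⟩
    obtain ⟨hx, hy, hxy, hsum⟩ := id hm
    have hsum' : r ≤ L x + L y := hsum
    have hx' : x ≤ k := hx
    have hy' : y ≤ k := hy
    have hxy' : x ≠ y := hxy
    rcases Nat.eq_zero_or_pos y with rfl | hy1
    · have hLx : r ≤ L x := by rw [hL0] at hsum'; linarith
      have hx1 : 1 ≤ x := by omega
      have hxk : x ≤ k - 1 := by
        rcases Nat.lt_or_ge x k with h | h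
        · omega
        · have : x = k := by omega
          rw [this] at hLx; linarith
      exact claimA x hx1 hxk hm
    · rcases Nat.eq_zero_or_pos x with rfl | hx1
      · have hLy : r ≤ L y := by rw [hL0] at hsum'; linarith
        have hyk : y ≤ k - 1 := by
          rcases Nat.lt_or_ge y k with h | h
          · omega
          · have : y = k := by omega
            rw [this] at hLy; linarith
        exact claimA' y hy1 hyk hm
      · rcases Nat.lt_or_ge x k with hxk | hxk
        · have hLx := hLge x hx1 (by omega)
          have m0 : IsModelVertex k r L (x, 0) :=
            ⟨by omega, by omega, by omega, show r ≤ L x + L 0 by rw [hL0]; linarith⟩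
          exact (claimA x hx1 (by omega) m0).trans
            (hA1 x y m0 hm (by omega) hLx).reachable
        · have hyk : y ≤ k - 1 := by omega
          have hLy := hLge y hy1 hyk
          have m0 : IsModelVertex k r L (0, y) :=
            ⟨by omega, by omega, by omega, show r ≤ L 0 + L y by rw [hL0]; linarith⟩
          exact (claimA' y hy1 hyk m0).trans
            (hA2 x y m0 hm (by omega) hLy).reachable
  have : Nonempty (ModelVertex k r L) := ⟨hub⟩
  exact ⟨fun u v => (main u).symm.trans (main v)⟩


/-- if `4 ≤ k`, `r ≤ L 1`, `L k < r` and `r ≤ L i` for all `i ∈ {2,…,k−1}`,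
then `(G_k)_{r,L}` has `k² + k − 2` vertices, `2(k−1)²` edges, is connected, and
`e − v + c = k² − 5k + 5`. -/
theorem model_counts_Lk_big (k : ℕ) (hk : 4 ≤ k) (r : ℝ) (hr : 0 < r) (L : ℕ → ℝ)
    (hL0 : L 0 = 0) (hLpos : ∀ i, 1 ≤ i → i ≤ k → 0 < L i)
    (hL1 : r ≤ L 1) (hLk : L k < r) (hrL : ∀ i, 2 ≤ i → i ≤ k - 1 → r ≤ L i) :
    Nat.card (ModelVertex k r L) = k ^ 2 + k - 2 ∧
    Nat.card (modelGraph k r L).edgeSet = 2 * (k - 1) ^ 2 ∧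
    (modelGraph k r L).Connected ∧
    (Nat.card (modelGraph k r L).edgeSet : ℤ) - (Nat.card (ModelVertex k r L) : ℤ)
      + (Nat.card (modelGraph k r L).ConnectedComponent : ℤ)
      = (k : ℤ) ^ 2 - 5 * (k : ℤ) + 5 := by
  have hLge : ∀ i, 1 ≤ i → i ≤ k - 1 → r ≤ L i := by
    intro i h1 h2
    rcases eq_or_ne i 1 with rfl | h
    · exact hL1
    · exact hrL i (by omega) h2
  have hv : Nat.card (ModelVertex k r L) = k ^ 2 + k - 2 := by
    have e0 : ModelVertex k r L = ↥{p : ℕ × ℕ | IsModelVertex k r L p} := rfl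
    rw [e0, Nat.card_coe_set_eq, model_vset_eq k hk r hr L hL0 hLpos hLk hLge,
      Set.ncard_coe_finset, model_vfin_card k hk]
  have he : Nat.card (modelGraph k r L).edgeSet = 2 * (k - 1) ^ 2 := by
    rw [Nat.card_coe_set_eq,
      ← Set.ncard_image_of_injective (modelGraph k r L).edgeSet (Sym2.map.injective Subtype.val_injective)]
    erw [model_eset_eq k hk r hr L hL0 hLpos hLk hLge]
    rw [Set.ncard_coe_finset,
      Finset.card_union_of_disjoint (modelEFin_disjoint k hk),
      modelEFin1_card k hk, modelEFin2_card k hk]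
    ring
  have hcon : (modelGraph k r L).Connected :=
    model_connected k hk r hr L hL0 hLpos hLk hLge
  have hc : Nat.card (modelGraph k r L).ConnectedComponent = 1 := by
    rw [Nat.card_eq_one_iff_unique]
    constructor
    · constructor
      intro c d
      refine SimpleGraph.ConnectedComponent.ind₂ (fun u v => ?_) c d
      exact SimpleGraph.ConnectedComponent.sound (hcon.preconnected u v)
    · exact ⟨(modelGraph k r L).connectedComponentMk hcon.nonempty.some⟩
  refine ⟨hv, he, hcon, ?_⟩
  rw [hv, he, hc]
  have h1 : 1 ≤ k := by omega
  have h2 : 2 ≤ k ^ 2 + k := by nlinarith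
  have e1 : ((k ^ 2 + k - 2 : ℕ) : ℤ) = (k : ℤ) ^ 2 + (k : ℤ) - 2 := by
    rw [Nat.cast_sub h2]; push_cast; ring
  have e2 : ((2 * (k - 1) ^ 2 : ℕ) : ℤ) = 2 * ((k : ℤ) - 1) ^ 2 := by
    push_cast [Nat.cast_sub h1]
    ring
  rw [e1, e2]
  ring
end

section
/- Let k ≥ 4 and r > 0 and L_1, …, L_k > 0. Then e(G') − v(G') + c(G') = e(G) − v(G) + c(G), where G = (G_k)_{r,L} is the model graph and G' = (G_k)'_{r,L} is the reduced graph. -/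
/-- A pair is a vertex of the reduced graph `(G_k)'_{r,L}`: either `(x,0)` with
`1 ≤ x ≤ k` and `L x ≥ r`, or `(0,y)` with `1 ≤ y ≤ k` and `L y ≥ r`. -/
def IsReducedVertex (k : ℕ) (r : ℝ) (L : ℕ → ℝ) (p : ℕ × ℕ) : Prop :=
  (p.2 = 0 ∧ 1 ≤ p.1 ∧ p.1 ≤ k ∧ r ≤ L p.1) ∨ (p.1 = 0 ∧ 1 ≤ p.2 ∧ p.2 ≤ k ∧ r ≤ L p.2)

/-- The vertex type of the reduced graph `(G_k)'_{r,L}`. -/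
def ReducedVertex (k : ℕ) (r : ℝ) (L : ℕ → ℝ) : Type :=
  {p : ℕ × ℕ // IsReducedVertex k r L p}

/-- Adjacency in the reduced graph: `(x,0)` and `(0,y)` are adjacent iff `x ≠ y`. -/
def ReducedAdj (a b : ℕ × ℕ) : Prop :=
  (a.2 = 0 ∧ b.1 = 0 ∧ a.1 ≠ b.2) ∨ (a.1 = 0 ∧ b.2 = 0 ∧ b.1 ≠ a.2)

theorem ReducedAdj.symm {a b : ℕ × ℕ} (h : ReducedAdj a b) : ReducedAdj b a := by
  rcases h with ⟨h1, h2, h3⟩ | ⟨h1, h2, h3⟩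
  · exact Or.inr ⟨h2, h1, h3⟩
  · exact Or.inl ⟨h2, h1, h3⟩

theorem ReducedAdj.irrefl {a : ℕ × ℕ} (h : ReducedAdj a a) : False := by
  rcases h with ⟨h1, h2, h3⟩ | ⟨h1, h2, h3⟩ <;> omega

/-- The reduced graph `(G_k)'_{r,L}`. -/
def reducedGraph (k : ℕ) (r : ℝ) (L : ℕ → ℝ) : SimpleGraph (ReducedVertex k r L) where
  Adj a b := ReducedAdj a.val b.val
  symm := ⟨fun _ _ h => h.symm⟩
  loopless := ⟨fun _ h => h.irrefl⟩

namespace EulerAux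

open Finset SimpleGraph

open scoped Classical in
noncomputable def SB (k : ℕ) (r : ℝ) (L : ℕ → ℝ) : Finset ℕ :=
  (Finset.Icc 1 k).filter fun x => r ≤ L x

open scoped Classical in
noncomputable def Inn (k : ℕ) (r : ℝ) (L : ℕ → ℝ) : Finset (ℕ × ℕ) :=
  ((Finset.Icc 1 k) ×ˢ (Finset.Icc 1 k)).filter fun p => p.1 ≠ p.2 ∧ r ≤ L p.1 + L p.2

open scoped Classical in
noncomputable def IsoF (k : ℕ) (r : ℝ) (L : ℕ → ℝ) : Finset (ℕ × ℕ) :=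
  (Inn k r L).filter fun p => p.1 ∉ SB k r L ∧ p.2 ∉ SB k r L

open scoped Classical in
noncomputable def Hub1 (k : ℕ) (r : ℝ) (L : ℕ → ℝ) : Finset (ℕ × ℕ) :=
  ((Finset.Icc 1 k) ×ˢ (Finset.Icc 1 k)).filter fun p => p.1 ≠ p.2 ∧ p.1 ∈ SB k r L

open scoped Classical in
noncomputable def Hub2 (k : ℕ) (r : ℝ) (L : ℕ → ℝ) : Finset (ℕ × ℕ) :=
  ((Finset.Icc 1 k) ×ˢ (Finset.Icc 1 k)).filter fun p => p.1 ≠ p.2 ∧ p.2 ∈ SB k r L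

open scoped Classical in
noncomputable def RedE (k : ℕ) (r : ℝ) (L : ℕ → ℝ) : Finset (ℕ × ℕ) :=
  ((SB k r L) ×ˢ (SB k r L)).filter fun p => p.1 ≠ p.2

variable {k : ℕ} {r : ℝ} {L : ℕ → ℝ}

lemma mem_SB {x : ℕ} : x ∈ SB k r L ↔ 1 ≤ x ∧ x ≤ k ∧ r ≤ L x := by
  simp [SB, Finset.mem_filter, Finset.mem_Icc, and_assoc]

lemma zero_not_mem_SB : (0 : ℕ) ∉ SB k r L := by
  simp [mem_SB]

lemma mem_Inn {p : ℕ × ℕ} :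
    p ∈ Inn k r L ↔ 1 ≤ p.1 ∧ p.1 ≤ k ∧ 1 ≤ p.2 ∧ p.2 ≤ k ∧ p.1 ≠ p.2 ∧ r ≤ L p.1 + L p.2 := by
  simp [Inn, Finset.mem_filter, Finset.mem_product, Finset.mem_Icc, and_assoc]

lemma mem_Hub1 {p : ℕ × ℕ} :
    p ∈ Hub1 k r L ↔ 1 ≤ p.1 ∧ p.1 ≤ k ∧ 1 ≤ p.2 ∧ p.2 ≤ k ∧ p.1 ≠ p.2 ∧ p.1 ∈ SB k r L := by
  simp [Hub1, Finset.mem_filter, Finset.mem_product, Finset.mem_Icc, and_assoc]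

lemma mem_Hub2 {p : ℕ × ℕ} :
    p ∈ Hub2 k r L ↔ 1 ≤ p.1 ∧ p.1 ≤ k ∧ 1 ≤ p.2 ∧ p.2 ≤ k ∧ p.1 ≠ p.2 ∧ p.2 ∈ SB k r L := by
  simp [Hub2, Finset.mem_filter, Finset.mem_product, Finset.mem_Icc, and_assoc]

lemma mem_RedE {p : ℕ × ℕ} :
    p ∈ RedE k r L ↔ p.1 ∈ SB k r L ∧ p.2 ∈ SB k r L ∧ p.1 ≠ p.2 := by
  simp [RedE, Finset.mem_filter, Finset.mem_product, and_assoc]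

lemma inn_card_split (hLpos : ∀ i, 1 ≤ i → i ≤ k → 0 < L i) :
    (Inn k r L).card = (IsoF k r L).card + ((Hub1 k r L) ∪ (Hub2 k r L)).card := by
  classical
  have h := Finset.card_filter_add_card_filter_not
    (s := Inn k r L) (p := fun p => p.1 ∈ SB k r L ∨ p.2 ∈ SB k r L)
  have h1 : (Inn k r L).filter (fun p => ¬(p.1 ∈ SB k r L ∨ p.2 ∈ SB k r L)) = IsoF k r L := by
    ext p
    simp [IsoF, Finset.mem_filter, not_or]
  have h2 : (Inn k r L).filter (fun p => p.1 ∈ SB k r L ∨ p.2 ∈ SB k r L)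
      = (Hub1 k r L) ∪ (Hub2 k r L) := by
    ext p
    simp only [Finset.mem_filter, Finset.mem_union, mem_Inn, mem_Hub1, mem_Hub2]
    constructor
    · rintro ⟨⟨a, b, c, d, e, f⟩, hs | hs⟩
      · exact Or.inl ⟨a, b, c, d, e, hs⟩
      · exact Or.inr ⟨a, b, c, d, e, hs⟩
    · rintro (⟨a, b, c, d, e, hs⟩ | ⟨a, b, c, d, e, hs⟩)
      · refine ⟨⟨a, b, c, d, e, ?_⟩, Or.inl hs⟩
        have := hLpos p.2 c d
        have := (mem_SB.mp hs).2.2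
        linarith
      · refine ⟨⟨a, b, c, d, e, ?_⟩, Or.inr hs⟩
        have := hLpos p.1 a b
        have := (mem_SB.mp hs).2.2
        linarith
  rw [h1, h2] at h
  omega

lemma redE_eq_inter : RedE k r L = (Hub1 k r L) ∩ (Hub2 k r L) := by
  ext p
  simp only [mem_RedE, Finset.mem_inter, mem_Hub1, mem_Hub2]
  constructor
  · rintro ⟨h1, h2, h3⟩
    obtain ⟨a1, b1, _⟩ := mem_SB.mp h1
    obtain ⟨a2, b2, _⟩ := mem_SB.mp h2
    exact ⟨⟨a1, b1, a2, b2, h3, h1⟩, ⟨a1, b1, a2, b2, h3, h2⟩⟩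
  · rintro ⟨⟨_, _, _, _, h3, h1⟩, ⟨_, _, _, _, _, h2⟩⟩
    exact ⟨h1, h2, h3⟩

lemma edge_card_split (hLpos : ∀ i, 1 ≤ i → i ≤ k → 0 < L i) :
    (Hub1 k r L).card + (Hub2 k r L).card
      = ((Hub1 k r L) ∪ (Hub2 k r L)).card + (RedE k r L).card := by
  rw [redE_eq_inter]
  exact (Finset.card_union_add_card_inter _ _).symm

lemma isModel_of_isReduced (hL0 : L 0 = 0) {p : ℕ × ℕ} (hp : IsReducedVertex k r L p) :
    IsModelVertex k r L p := by
  rcases hp with ⟨h0, h1, h2, h3⟩ | ⟨h0, h1, h2, h3⟩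
  · exact ⟨h2, by omega, by omega, by rw [h0, hL0]; linarith⟩
  · exact ⟨by omega, h2, by omega, by rw [h0, hL0]; linarith⟩

lemma isModel_of_mem_Inn {p : ℕ × ℕ} (hp : p ∈ Inn k r L) : IsModelVertex k r L p := by
  obtain ⟨_, h2, _, h4, h5, h6⟩ := mem_Inn.mp hp
  exact ⟨h2, h4, h5, h6⟩

noncomputable def vFun (hL0 : L 0 = 0) :
    (ReducedVertex k r L) ⊕ ↥(Inn k r L) → ModelVertex k r L
  | Sum.inl p => ⟨p.1, isModel_of_isReduced hL0 p.2⟩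
  | Sum.inr q => ⟨q.1, isModel_of_mem_Inn q.2⟩

lemma vFun_bij (hL0 : L 0 = 0) : Function.Bijective (vFun (k := k) (r := r) (L := L) hL0) := by
  constructor
  · rintro (⟨p, hp⟩ | ⟨p, hp⟩) (⟨q, hq⟩ | ⟨q, hq⟩) h <;>
      have hpq : p = q := congrArg Subtype.val h
    · subst hpq; rfl
    · exfalso
      obtain ⟨h1, _, h3, _, _, _⟩ := mem_Inn.mp hq
      rcases hp with ⟨h0, hx, _⟩ | ⟨h0, hx, _⟩ <;> rw [hpq] at h0 <;> omega
    · exfalso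
      obtain ⟨h1, _, h3, _, _, _⟩ := mem_Inn.mp hp
      rcases hq with ⟨h0, hx, _⟩ | ⟨h0, hx, _⟩ <;> rw [← hpq] at h0 <;> omega
    · subst hpq; rfl
  · rintro ⟨⟨x, y⟩, hx1, hx2, hx3, hx4⟩
    by_cases h1 : x = 0
    · refine ⟨Sum.inl ⟨(x, y), Or.inr ⟨h1, by omega, hx2, ?_⟩⟩, rfl⟩
      subst h1; rw [hL0] at hx4; simpa using hx4
    · by_cases h2 : y = 0
      · refine ⟨Sum.inl ⟨(x, y), Or.inl ⟨h2, by omega, hx1, ?_⟩⟩, rfl⟩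
        subst h2; rw [hL0] at hx4; simpa using hx4
      · exact ⟨Sum.inr ⟨(x, y), mem_Inn.mpr ⟨by omega, hx1, by omega, hx2, hx3, hx4⟩⟩, rfl⟩

lemma finite_model : Finite (ModelVertex k r L) := by
  refine Finite.of_injective
    (fun v : ModelVertex k r L =>
      ((⟨v.1.1, Nat.lt_succ_of_le v.2.1⟩ : Fin (k + 1)),
       (⟨v.1.2, Nat.lt_succ_of_le v.2.2.1⟩ : Fin (k + 1)))) ?_
  rintro ⟨⟨a, b⟩, _⟩ ⟨⟨c, d⟩, _⟩ h
  simp only [Prod.mk.injEq, Fin.mk.injEq] at h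
  obtain ⟨rfl, rfl⟩ := h; rfl

lemma finite_reduced : Finite (ReducedVertex k r L) := by
  have h : ∀ p : ℕ × ℕ, IsReducedVertex k r L p → p.1 ≤ k ∧ p.2 ≤ k := by
    rintro p (⟨h0, h1, h2, _⟩ | ⟨h0, h1, h2, _⟩) <;> omega
  refine Finite.of_injective
    (fun v : ReducedVertex k r L =>
      ((⟨v.1.1, Nat.lt_succ_of_le (h v.1 v.2).1⟩ : Fin (k + 1)),
       (⟨v.1.2, Nat.lt_succ_of_le (h v.1 v.2).2⟩ : Fin (k + 1)))) ?_
  rintro ⟨⟨a, b⟩, _⟩ ⟨⟨c, d⟩, _⟩ hh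
  simp only [Prod.mk.injEq, Fin.mk.injEq] at hh
  obtain ⟨rfl, rfl⟩ := hh; rfl

lemma model_vertex_card (hL0 : L 0 = 0) :
    Nat.card (ModelVertex k r L)
      = Nat.card (ReducedVertex k r L) + (Inn k r L).card := by
  haveI := finite_reduced (k := k) (r := r) (L := L)
  rw [← Nat.card_congr (Equiv.ofBijective _ (vFun_bij (k := k) (r := r) (L := L) hL0)),
    Nat.card_sum, Nat.card_eq_finsetCard]

lemma hub1_v0 (hL0 : L 0 = 0) {p : ℕ × ℕ} (hp : p ∈ Hub1 k r L) :
    IsModelVertex k r L (p.1, 0) := by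
  obtain ⟨a, b, c, d, e, f⟩ := mem_Hub1.mp hp
  refine ⟨b, Nat.zero_le k, by omega, ?_⟩
  show r ≤ L p.1 + L 0
  rw [hL0]
  have := (mem_SB.mp f).2.2
  linarith

lemma hub1_mid (hLpos : ∀ i, 1 ≤ i → i ≤ k → 0 < L i) {p : ℕ × ℕ}
    (hp : p ∈ Hub1 k r L) : IsModelVertex k r L p := by
  obtain ⟨a, b, c, d, e, f⟩ := mem_Hub1.mp hp
  refine ⟨b, d, e, ?_⟩
  have := hLpos p.2 c d
  have := (mem_SB.mp f).2.2
  linarith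

lemma hub1_adj {p : ℕ × ℕ} (hp : p ∈ Hub1 k r L) : ModelAdj r L (p.1, 0) p := by
  obtain ⟨a, b, c, d, e, f⟩ := mem_Hub1.mp hp
  exact Or.inl ⟨rfl, Or.inl ⟨rfl, by omega⟩, (mem_SB.mp f).2.2⟩

lemma hub2_v0 (hL0 : L 0 = 0) {p : ℕ × ℕ} (hp : p ∈ Hub2 k r L) :
    IsModelVertex k r L (0, p.2) := by
  obtain ⟨a, b, c, d, e, f⟩ := mem_Hub2.mp hp
  refine ⟨Nat.zero_le k, d, by omega, ?_⟩
  show r ≤ L 0 + L p.2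
  rw [hL0]
  have := (mem_SB.mp f).2.2
  linarith

lemma hub2_mid (hLpos : ∀ i, 1 ≤ i → i ≤ k → 0 < L i) {p : ℕ × ℕ}
    (hp : p ∈ Hub2 k r L) : IsModelVertex k r L p := by
  obtain ⟨a, b, c, d, e, f⟩ := mem_Hub2.mp hp
  refine ⟨b, d, e, ?_⟩
  have := hLpos p.1 a b
  have := (mem_SB.mp f).2.2
  linarith

lemma hub2_adj {p : ℕ × ℕ} (hp : p ∈ Hub2 k r L) : ModelAdj r L (0, p.2) p := by
  obtain ⟨a, b, c, d, e, f⟩ := mem_Hub2.mp hp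
  exact Or.inr ⟨rfl, Or.inl ⟨rfl, by omega⟩, (mem_SB.mp f).2.2⟩

noncomputable def eFun (hL0 : L 0 = 0) (hLpos : ∀ i, 1 ≤ i → i ≤ k → 0 < L i) :
    ↥(Hub1 k r L) ⊕ ↥(Hub2 k r L) → ↥(modelGraph k r L).edgeSet
  | Sum.inl p => ⟨s(⟨(p.1.1, 0), hub1_v0 hL0 p.2⟩, ⟨p.1, hub1_mid hLpos p.2⟩),
      (modelGraph k r L).mem_edgeSet.mpr (hub1_adj p.2)⟩
  | Sum.inr p => ⟨s(⟨(0, p.1.2), hub2_v0 hL0 p.2⟩, ⟨p.1, hub2_mid hLpos p.2⟩),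
      (modelGraph k r L).mem_edgeSet.mpr (hub2_adj p.2)⟩

lemma eFun_bij (hL0 : L 0 = 0) (hLpos : ∀ i, 1 ≤ i → i ≤ k → 0 < L i) :
    Function.Bijective (eFun (k := k) (r := r) (L := L) hL0 hLpos) := by
  constructor
  · rintro (⟨p, hp⟩ | ⟨p, hp⟩) (⟨q, hq⟩ | ⟨q, hq⟩) h
    · have h' : s((⟨(p.1, 0), hub1_v0 hL0 hp⟩ : ModelVertex k r L),
          (⟨p, hub1_mid hLpos hp⟩ : ModelVertex k r L))
          = s((⟨(q.1, 0), hub1_v0 hL0 hq⟩ : ModelVertex k r L),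
          (⟨q, hub1_mid hLpos hq⟩ : ModelVertex k r L)) := congrArg Subtype.val h
      rw [Sym2.eq_iff] at h'
      rcases h' with ⟨hA, hB⟩ | ⟨hA, hB⟩
      · have hpq : p = q := congrArg Subtype.val hB
        subst hpq; rfl
      · obtain ⟨q1, q2, q3, q4, q5, q6⟩ := mem_Hub1.mp hq
        have e : (0 : ℕ) = q.2 := congrArg (fun t : ModelVertex k r L => t.val.2) hA
        omega
    · have h' : s((⟨(p.1, 0), hub1_v0 hL0 hp⟩ : ModelVertex k r L),
          (⟨p, hub1_mid hLpos hp⟩ : ModelVertex k r L))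
          = s((⟨(0, q.2), hub2_v0 hL0 hq⟩ : ModelVertex k r L),
          (⟨q, hub2_mid hLpos hq⟩ : ModelVertex k r L)) := congrArg Subtype.val h
      rw [Sym2.eq_iff] at h'
      obtain ⟨p1, p2, p3, p4, p5, p6⟩ := mem_Hub1.mp hp
      obtain ⟨q1, q2, q3, q4, q5, q6⟩ := mem_Hub2.mp hq
      rcases h' with ⟨hA, hB⟩ | ⟨hA, hB⟩
      · have e : p.1 = 0 := congrArg (fun t : ModelVertex k r L => t.val.1) hA
        omega
      · have e : (0 : ℕ) = q.2 := congrArg (fun t : ModelVertex k r L => t.val.2) hA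
        omega
    · have h' : s((⟨(0, p.2), hub2_v0 hL0 hp⟩ : ModelVertex k r L),
          (⟨p, hub2_mid hLpos hp⟩ : ModelVertex k r L))
          = s((⟨(q.1, 0), hub1_v0 hL0 hq⟩ : ModelVertex k r L),
          (⟨q, hub1_mid hLpos hq⟩ : ModelVertex k r L)) := congrArg Subtype.val h
      rw [Sym2.eq_iff] at h'
      obtain ⟨p1, p2, p3, p4, p5, p6⟩ := mem_Hub2.mp hp
      obtain ⟨q1, q2, q3, q4, q5, q6⟩ := mem_Hub1.mp hq
      rcases h' with ⟨hA, hB⟩ | ⟨hA, hB⟩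
      · have e : (0 : ℕ) = q.1 := congrArg (fun t : ModelVertex k r L => t.val.1) hA
        omega
      · have e : (0 : ℕ) = q.1 := congrArg (fun t : ModelVertex k r L => t.val.1) hA
        omega
    · have h' : s((⟨(0, p.2), hub2_v0 hL0 hp⟩ : ModelVertex k r L),
          (⟨p, hub2_mid hLpos hp⟩ : ModelVertex k r L))
          = s((⟨(0, q.2), hub2_v0 hL0 hq⟩ : ModelVertex k r L),
          (⟨q, hub2_mid hLpos hq⟩ : ModelVertex k r L)) := congrArg Subtype.val h
      rw [Sym2.eq_iff] at h'
      rcases h' with ⟨hA, hB⟩ | ⟨hA, hB⟩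
      · have hpq : p = q := congrArg Subtype.val hB
        subst hpq; rfl
      · obtain ⟨q1, q2, q3, q4, q5, q6⟩ := mem_Hub2.mp hq
        have e : (0 : ℕ) = q.1 := congrArg (fun t : ModelVertex k r L => t.val.1) hA
        omega
  · rintro ⟨e, he⟩
    revert he
    induction e using Sym2.ind with
    | _ a b =>
      intro he
      have had := (modelGraph k r L).mem_edgeSet.mp he
      obtain ⟨ha1, ha2, ha3, ha4⟩ := a.2
      obtain ⟨hb1, hb2, hb3, hb4⟩ := b.2
      rcases had with ⟨h1, h2 | h2, h3⟩ | ⟨h1, h2 | h2, h3⟩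
      · have hm : (a.1.1, b.1.2) ∈ Hub1 k r L := mem_Hub1.mpr
          ⟨by omega, ha1, by omega, hb2, by omega, mem_SB.mpr ⟨by omega, ha1, h3⟩⟩
        refine ⟨Sum.inl ⟨(a.1.1, b.1.2), hm⟩, Subtype.ext ?_⟩
        show s((⟨(a.1.1, 0), hub1_v0 (p := (a.1.1, b.1.2)) hL0 hm⟩ : ModelVertex k r L),
            (⟨(a.1.1, b.1.2), hub1_mid hLpos hm⟩ : ModelVertex k r L)) = s(a, b)
        have ea : (⟨(a.1.1, 0), hub1_v0 (p := (a.1.1, b.1.2)) hL0 hm⟩ : ModelVertex k r L) = a :=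
          Subtype.ext (Prod.ext rfl h2.1.symm)
        have eb : (⟨(a.1.1, b.1.2), hub1_mid hLpos hm⟩ : ModelVertex k r L) = b :=
          Subtype.ext (Prod.ext h1 rfl)
        rw [ea, eb]
        rfl
      · have hm : (a.1.1, a.1.2) ∈ Hub1 k r L := mem_Hub1.mpr
          ⟨by omega, ha1, by omega, ha2, by omega, mem_SB.mpr ⟨by omega, ha1, h3⟩⟩
        refine ⟨Sum.inl ⟨(a.1.1, a.1.2), hm⟩, Subtype.ext ?_⟩
        show s((⟨(a.1.1, 0), hub1_v0 (p := (a.1.1, a.1.2)) hL0 hm⟩ : ModelVertex k r L),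
            (⟨(a.1.1, a.1.2), hub1_mid hLpos hm⟩ : ModelVertex k r L)) = s(a, b)
        have ea : (⟨(a.1.1, 0), hub1_v0 (p := (a.1.1, a.1.2)) hL0 hm⟩ : ModelVertex k r L) = b :=
          Subtype.ext (Prod.ext h1 h2.2.symm)
        have eb : (⟨(a.1.1, a.1.2), hub1_mid hLpos hm⟩ : ModelVertex k r L) = a :=
          Subtype.ext (Prod.ext rfl rfl)
        rw [ea, eb]
        exact Sym2.eq_swap
      · have hm : (b.1.1, a.1.2) ∈ Hub2 k r L := mem_Hub2.mpr
          ⟨by omega, hb1, by omega, ha2, by omega, mem_SB.mpr ⟨by omega, ha2, h3⟩⟩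
        refine ⟨Sum.inr ⟨(b.1.1, a.1.2), hm⟩, Subtype.ext ?_⟩
        show s((⟨(0, a.1.2), hub2_v0 (p := (b.1.1, a.1.2)) hL0 hm⟩ : ModelVertex k r L),
            (⟨(b.1.1, a.1.2), hub2_mid hLpos hm⟩ : ModelVertex k r L)) = s(a, b)
        have ea : (⟨(0, a.1.2), hub2_v0 (p := (b.1.1, a.1.2)) hL0 hm⟩ : ModelVertex k r L) = a :=
          Subtype.ext (Prod.ext h2.1.symm rfl)
        have eb : (⟨(b.1.1, a.1.2), hub2_mid hLpos hm⟩ : ModelVertex k r L) = b :=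
          Subtype.ext (Prod.ext rfl h1)
        rw [ea, eb]
        rfl
      · have hm : (a.1.1, a.1.2) ∈ Hub2 k r L := mem_Hub2.mpr
          ⟨by omega, ha1, by omega, ha2, by omega, mem_SB.mpr ⟨by omega, ha2, h3⟩⟩
        refine ⟨Sum.inr ⟨(a.1.1, a.1.2), hm⟩, Subtype.ext ?_⟩
        show s((⟨(0, a.1.2), hub2_v0 (p := (a.1.1, a.1.2)) hL0 hm⟩ : ModelVertex k r L),
            (⟨(a.1.1, a.1.2), hub2_mid hLpos hm⟩ : ModelVertex k r L)) = s(a, b)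
        have ea : (⟨(0, a.1.2), hub2_v0 (p := (a.1.1, a.1.2)) hL0 hm⟩ : ModelVertex k r L) = b :=
          Subtype.ext (Prod.ext h2.2.symm h1)
        have eb : (⟨(a.1.1, a.1.2), hub2_mid hLpos hm⟩ : ModelVertex k r L) = a :=
          Subtype.ext (Prod.ext rfl rfl)
        rw [ea, eb]
        exact Sym2.eq_swap

lemma model_edge_card (hL0 : L 0 = 0) (hLpos : ∀ i, 1 ≤ i → i ≤ k → 0 < L i) :
    Nat.card ↥(modelGraph k r L).edgeSet = (Hub1 k r L).card + (Hub2 k r L).card := by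
  haveI := finite_model (k := k) (r := r) (L := L)
  rw [← Nat.card_congr (Equiv.ofBijective _ (eFun_bij (k := k) (r := r) (L := L) hL0 hLpos)),
    Nat.card_sum, Nat.card_eq_finsetCard, Nat.card_eq_finsetCard]

lemma redE_v1 {p : ℕ × ℕ} (hp : p ∈ RedE k r L) : IsReducedVertex k r L (p.1, 0) := by
  obtain ⟨h1, _, _⟩ := mem_RedE.mp hp
  obtain ⟨a, b, c⟩ := mem_SB.mp h1
  exact Or.inl ⟨rfl, a, b, c⟩

lemma redE_v2 {p : ℕ × ℕ} (hp : p ∈ RedE k r L) : IsReducedVertex k r L (0, p.2) := by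
  obtain ⟨_, h2, _⟩ := mem_RedE.mp hp
  obtain ⟨a, b, c⟩ := mem_SB.mp h2
  exact Or.inr ⟨rfl, a, b, c⟩

lemma redE_adj {p : ℕ × ℕ} (hp : p ∈ RedE k r L) : ReducedAdj (p.1, 0) (0, p.2) :=
  Or.inl ⟨rfl, rfl, (mem_RedE.mp hp).2.2⟩

noncomputable def rFun : ↥(RedE k r L) → ↥(reducedGraph k r L).edgeSet
  | p => ⟨s(⟨(p.1.1, 0), redE_v1 p.2⟩, ⟨(0, p.1.2), redE_v2 p.2⟩),
      (reducedGraph k r L).mem_edgeSet.mpr (redE_adj p.2)⟩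

lemma rFun_bij : Function.Bijective (rFun (k := k) (r := r) (L := L)) := by
  constructor
  · rintro ⟨p, hp⟩ ⟨q, hq⟩ h
    have h' : s((⟨(p.1, 0), redE_v1 hp⟩ : ReducedVertex k r L),
        (⟨(0, p.2), redE_v2 hp⟩ : ReducedVertex k r L))
        = s((⟨(q.1, 0), redE_v1 hq⟩ : ReducedVertex k r L),
        (⟨(0, q.2), redE_v2 hq⟩ : ReducedVertex k r L)) := congrArg Subtype.val h
    rw [Sym2.eq_iff] at h'
    obtain ⟨p1, p2, p3⟩ := mem_RedE.mp hp
    obtain ⟨q1, q2, q3⟩ := mem_RedE.mp hq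
    rcases h' with ⟨hA, hB⟩ | ⟨hA, hB⟩
    · have e1 : p.1 = q.1 := congrArg (fun t : ReducedVertex k r L => t.val.1) hA
      have e2 : p.2 = q.2 := congrArg (fun t : ReducedVertex k r L => t.val.2) hB
      have hpq : p = q := Prod.ext e1 e2
      subst hpq; rfl
    · have e1 : p.1 = 0 := congrArg (fun t : ReducedVertex k r L => t.val.1) hA
      have := (mem_SB.mp p1).1
      omega
  · rintro ⟨e, he⟩
    revert he
    induction e using Sym2.ind with
    | _ a b =>
      intro he
      have had := (reducedGraph k r L).mem_edgeSet.mp he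
      rcases had with ⟨h1, h2, h3⟩ | ⟨h1, h2, h3⟩
      · have hsa : a.1.1 ∈ SB k r L := by
          rcases a.2 with ⟨_, x1, x2, x3⟩ | ⟨x0, x1, _, _⟩
          · exact mem_SB.mpr ⟨x1, x2, x3⟩
          · exfalso; omega
        have hsb : b.1.2 ∈ SB k r L := by
          rcases b.2 with ⟨x0, x1, _, _⟩ | ⟨_, x1, x2, x3⟩
          · exfalso; omega
          · exact mem_SB.mpr ⟨x1, x2, x3⟩
        have hm : (a.1.1, b.1.2) ∈ RedE k r L := mem_RedE.mpr ⟨hsa, hsb, h3⟩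
        refine ⟨⟨(a.1.1, b.1.2), hm⟩, Subtype.ext ?_⟩
        show s((⟨(a.1.1, 0), redE_v1 (p := (a.1.1, b.1.2)) hm⟩ : ReducedVertex k r L),
            (⟨(0, b.1.2), redE_v2 (p := (a.1.1, b.1.2)) hm⟩ : ReducedVertex k r L)) = s(a, b)
        have ea : (⟨(a.1.1, 0), redE_v1 (p := (a.1.1, b.1.2)) hm⟩ : ReducedVertex k r L) = a :=
          Subtype.ext (Prod.ext rfl h1.symm)
        have eb : (⟨(0, b.1.2), redE_v2 (p := (a.1.1, b.1.2)) hm⟩ : ReducedVertex k r L) = b :=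
          Subtype.ext (Prod.ext h2.symm rfl)
        rw [ea, eb]
        rfl
      · have hsb : b.1.1 ∈ SB k r L := by
          rcases b.2 with ⟨_, x1, x2, x3⟩ | ⟨x0, x1, _, _⟩
          · exact mem_SB.mpr ⟨x1, x2, x3⟩
          · exfalso; omega
        have hsa : a.1.2 ∈ SB k r L := by
          rcases a.2 with ⟨x0, x1, _, _⟩ | ⟨_, x1, x2, x3⟩
          · exfalso; omega
          · exact mem_SB.mpr ⟨x1, x2, x3⟩
        have hm : (b.1.1, a.1.2) ∈ RedE k r L := mem_RedE.mpr ⟨hsb, hsa, h3⟩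
        refine ⟨⟨(b.1.1, a.1.2), hm⟩, Subtype.ext ?_⟩
        show s((⟨(b.1.1, 0), redE_v1 (p := (b.1.1, a.1.2)) hm⟩ : ReducedVertex k r L),
            (⟨(0, a.1.2), redE_v2 (p := (b.1.1, a.1.2)) hm⟩ : ReducedVertex k r L)) = s(a, b)
        have ea : (⟨(b.1.1, 0), redE_v1 (p := (b.1.1, a.1.2)) hm⟩ : ReducedVertex k r L) = b :=
          Subtype.ext (Prod.ext rfl h2.symm)
        have eb : (⟨(0, a.1.2), redE_v2 (p := (b.1.1, a.1.2)) hm⟩ : ReducedVertex k r L) = a :=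
          Subtype.ext (Prod.ext h1.symm rfl)
        rw [ea, eb]
        exact Sym2.eq_swap

lemma reduced_edge_card :
    Nat.card ↥(reducedGraph k r L).edgeSet = (RedE k r L).card := by
  rw [← Nat.card_congr (Equiv.ofBijective _ (rFun_bij (k := k) (r := r) (L := L))),
    Nat.card_eq_finsetCard]

lemma mem_IsoF {p : ℕ × ℕ} :
    p ∈ IsoF k r L ↔ p ∈ Inn k r L ∧ p.1 ∉ SB k r L ∧ p.2 ∉ SB k r L := by
  simp [IsoF, Finset.mem_filter, and_assoc]

lemma iso_mem (hL0 : L 0 = 0) {p : ℕ × ℕ} (hv : IsModelVertex k r L p)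
    (hx : p.1 ∉ SB k r L) (hy : p.2 ∉ SB k r L) : p ∈ IsoF k r L := by
  obtain ⟨h1, h2, h3, h4⟩ := hv
  have hp1 : 1 ≤ p.1 := by
    by_contra hcon
    have e : p.1 = 0 := by omega
    apply hy
    apply mem_SB.mpr
    refine ⟨by omega, h2, ?_⟩
    rw [e, hL0] at h4
    linarith
  have hp2 : 1 ≤ p.2 := by
    by_contra hcon
    have e : p.2 = 0 := by omega
    apply hx
    apply mem_SB.mpr
    refine ⟨by omega, h1, ?_⟩
    rw [e, hL0] at h4
    linarith
  exact mem_IsoF.mpr ⟨mem_Inn.mpr ⟨hp1, h1, hp2, h2, h3, h4⟩, hx, hy⟩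

noncomputable def redOf1 {x : ℕ} (hx : x ∈ SB k r L) : ReducedVertex k r L :=
  ⟨(x, 0), Or.inl ⟨rfl, (mem_SB.mp hx).1, (mem_SB.mp hx).2.1, (mem_SB.mp hx).2.2⟩⟩

noncomputable def redOf2 {y : ℕ} (hy : y ∈ SB k r L) : ReducedVertex k r L :=
  ⟨(0, y), Or.inr ⟨rfl, (mem_SB.mp hy).1, (mem_SB.mp hy).2.1, (mem_SB.mp hy).2.2⟩⟩

noncomputable def iota (hL0 : L 0 = 0) (p : ReducedVertex k r L) : ModelVertex k r L :=
  ⟨p.1, isModel_of_isReduced hL0 p.2⟩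

open scoped Classical in
noncomputable def Fc (hL0 : L 0 = 0) (v : ModelVertex k r L) :
    (reducedGraph k r L).ConnectedComponent ⊕ ↥(IsoF k r L) :=
  if hx : v.1.1 ∈ SB k r L then
    Sum.inl ((reducedGraph k r L).connectedComponentMk (redOf1 hx))
  else if hy : v.1.2 ∈ SB k r L then
    Sum.inl ((reducedGraph k r L).connectedComponentMk (redOf2 hy))
  else Sum.inr ⟨v.1, iso_mem hL0 v.2 hx hy⟩

lemma Fc_pos1 (hL0 : L 0 = 0) (u : ModelVertex k r L) (hx : u.1.1 ∈ SB k r L) :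
    Fc hL0 u = Sum.inl ((reducedGraph k r L).connectedComponentMk (redOf1 hx)) := by
  unfold Fc
  rw [dif_pos hx]

lemma Fc_pos2 (hL0 : L 0 = 0) (u : ModelVertex k r L) (hx : u.1.1 ∉ SB k r L)
    (hy : u.1.2 ∈ SB k r L) :
    Fc hL0 u = Sum.inl ((reducedGraph k r L).connectedComponentMk (redOf2 hy)) := by
  unfold Fc
  rw [dif_neg hx, dif_pos hy]

lemma Fc_neg (hL0 : L 0 = 0) (u : ModelVertex k r L) (hx : u.1.1 ∉ SB k r L)
    (hy : u.1.2 ∉ SB k r L) :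
    Fc hL0 u = Sum.inr ⟨u.1, iso_mem hL0 u.2 hx hy⟩ := by
  unfold Fc
  rw [dif_neg hx, dif_neg hy]

lemma Fc_adj (hL0 : L 0 = 0) {u v : ModelVertex k r L}
    (h : (modelGraph k r L).Adj u v) : Fc hL0 u = Fc hL0 v := by
  obtain ⟨hu1, hu2, hu3, hu4⟩ := u.2
  obtain ⟨hv1, hv2, hv3, hv4⟩ := v.2
  rcases h with ⟨h1, h2, h3⟩ | ⟨h1, h2, h3⟩
  · have hx : u.1.1 ∈ SB k r L := mem_SB.mpr
      ⟨by rcases h2 with ⟨a, b⟩ | ⟨a, b⟩ <;> omega, hu1, h3⟩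
    have hx' : v.1.1 ∈ SB k r L := h1 ▸ hx
    rw [Fc_pos1 hL0 u hx, Fc_pos1 hL0 v hx']
    exact congrArg _ (congrArg _ (Subtype.ext (Prod.ext h1 rfl)))
  · have hy : u.1.2 ∈ SB k r L := mem_SB.mpr
      ⟨by rcases h2 with ⟨a, b⟩ | ⟨a, b⟩ <;> omega, hu2, h3⟩
    have hy' : v.1.2 ∈ SB k r L := h1 ▸ hy
    rcases h2 with ⟨ha, hb⟩ | ⟨ha, hb⟩
    · have hxu : u.1.1 ∉ SB k r L := by rw [ha]; exact zero_not_mem_SB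
      rw [Fc_pos2 hL0 u hxu hy]
      by_cases hxv : v.1.1 ∈ SB k r L
      · rw [Fc_pos1 hL0 v hxv]
        refine congrArg Sum.inl (SimpleGraph.ConnectedComponent.connectedComponentMk_eq_of_adj ?_)
        exact Or.inr ⟨rfl, rfl, show v.1.1 ≠ u.1.2 by omega⟩
      · rw [Fc_pos2 hL0 v hxv hy']
        exact congrArg _ (congrArg _ (Subtype.ext (Prod.ext rfl h1)))
    · have hxv : v.1.1 ∉ SB k r L := by rw [hb]; exact zero_not_mem_SB
      rw [Fc_pos2 hL0 v hxv hy']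
      by_cases hxu : u.1.1 ∈ SB k r L
      · rw [Fc_pos1 hL0 u hxu]
        refine congrArg Sum.inl (SimpleGraph.ConnectedComponent.connectedComponentMk_eq_of_adj ?_)
        exact Or.inl ⟨rfl, rfl, show u.1.1 ≠ v.1.2 by omega⟩
      · rw [Fc_pos2 hL0 u hxu hy]
        exact congrArg _ (congrArg _ (Subtype.ext (Prod.ext rfl h1)))

lemma Fc_walk (hL0 : L 0 = 0) {u v : ModelVertex k r L}
    (p : (modelGraph k r L).Walk u v) : Fc hL0 u = Fc hL0 v := by
  induction p with
  | nil => rfl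
  | cons h _ ih => exact (Fc_adj hL0 h).trans ih

lemma adj_step (hL0 : L 0 = 0) (hLpos : ∀ i, 1 ≤ i → i ≤ k → 0 < L i)
    {p q : ReducedVertex k r L} (h : (reducedGraph k r L).Adj p q) :
    (modelGraph k r L).Reachable (iota hL0 p) (iota hL0 q) := by
  rcases h with ⟨h1, h2, h3⟩ | ⟨h1, h2, h3⟩
  · have hp : 1 ≤ p.1.1 ∧ p.1.1 ≤ k ∧ r ≤ L p.1.1 := by
      rcases p.2 with ⟨_, a, b, c⟩ | ⟨a, b, _, _⟩
      · exact ⟨a, b, c⟩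
      · exfalso; omega
    have hq : 1 ≤ q.1.2 ∧ q.1.2 ≤ k ∧ r ≤ L q.1.2 := by
      rcases q.2 with ⟨a, b, _, _⟩ | ⟨_, a, b, c⟩
      · exfalso; omega
      · exact ⟨a, b, c⟩
    have hLq : 0 < L q.1.2 := hLpos q.1.2 hq.1 hq.2.1
    have hmid : IsModelVertex k r L (p.1.1, q.1.2) :=
      ⟨hp.2.1, hq.2.1, h3, by linarith [hp.2.2]⟩
    have a1 : (modelGraph k r L).Adj (iota hL0 p) ⟨(p.1.1, q.1.2), hmid⟩ :=
      Or.inl ⟨rfl, Or.inl ⟨h1, show q.1.2 ≠ 0 by omega⟩, hp.2.2⟩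
    have a2 : (modelGraph k r L).Adj ⟨(p.1.1, q.1.2), hmid⟩ (iota hL0 q) :=
      Or.inr ⟨rfl, Or.inr ⟨show p.1.1 ≠ 0 by omega, h2⟩, hq.2.2⟩
    exact a1.reachable.trans a2.reachable
  · have hp : 1 ≤ p.1.2 ∧ p.1.2 ≤ k ∧ r ≤ L p.1.2 := by
      rcases p.2 with ⟨a, b, _, _⟩ | ⟨_, a, b, c⟩
      · exfalso; omega
      · exact ⟨a, b, c⟩
    have hq : 1 ≤ q.1.1 ∧ q.1.1 ≤ k ∧ r ≤ L q.1.1 := by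
      rcases q.2 with ⟨_, a, b, c⟩ | ⟨a, b, _, _⟩
      · exact ⟨a, b, c⟩
      · exfalso; omega
    have hLp : 0 < L p.1.2 := hLpos p.1.2 hp.1 hp.2.1
    have hmid : IsModelVertex k r L (q.1.1, p.1.2) :=
      ⟨hq.2.1, hp.2.1, h3, by linarith [hq.2.2]⟩
    have a1 : (modelGraph k r L).Adj (iota hL0 p) ⟨(q.1.1, p.1.2), hmid⟩ :=
      Or.inr ⟨rfl, Or.inl ⟨h1, show q.1.1 ≠ 0 by omega⟩, hp.2.2⟩
    have a2 : (modelGraph k r L).Adj ⟨(q.1.1, p.1.2), hmid⟩ (iota hL0 q) :=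
      Or.inl ⟨rfl, Or.inr ⟨show p.1.2 ≠ 0 by omega, h2⟩, hq.2.2⟩
    exact a1.reachable.trans a2.reachable

lemma reach_iota (hL0 : L 0 = 0) (hLpos : ∀ i, 1 ≤ i → i ≤ k → 0 < L i)
    {p q : ReducedVertex k r L} (h : (reducedGraph k r L).Reachable p q) :
    (modelGraph k r L).Reachable (iota hL0 p) (iota hL0 q) := by
  obtain ⟨w⟩ := h
  induction w with
  | nil => exact SimpleGraph.Reachable.refl _
  | cons hadj _ ih => exact (adj_step hL0 hLpos hadj).trans ih

lemma Fc_spec (hL0 : L 0 = 0) (u : ModelVertex k r L) :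
    (∃ p : ReducedVertex k r L,
        Fc hL0 u = Sum.inl ((reducedGraph k r L).connectedComponentMk p) ∧
        (modelGraph k r L).Reachable u (iota hL0 p)) ∨
    (∃ hm : u.1 ∈ IsoF k r L, Fc hL0 u = Sum.inr ⟨u.1, hm⟩) := by
  by_cases hx : u.1.1 ∈ SB k r L
  · refine Or.inl ⟨redOf1 hx, Fc_pos1 hL0 u hx, ?_⟩
    by_cases h0 : u.1.2 = 0
    · have he : iota hL0 (redOf1 hx) = u := Subtype.ext (Prod.ext rfl h0.symm)
      rw [he]
    · exact SimpleGraph.Adj.reachable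
        (Or.inl ⟨rfl, Or.inr ⟨h0, rfl⟩, (mem_SB.mp hx).2.2⟩)
  · by_cases hy : u.1.2 ∈ SB k r L
    · refine Or.inl ⟨redOf2 hy, Fc_pos2 hL0 u hx hy, ?_⟩
      by_cases h0 : u.1.1 = 0
      · have he : iota hL0 (redOf2 hy) = u := Subtype.ext (Prod.ext h0.symm rfl)
        rw [he]
      · exact SimpleGraph.Adj.reachable
          (Or.inr ⟨rfl, Or.inr ⟨h0, rfl⟩, (mem_SB.mp hy).2.2⟩)
    · exact Or.inr ⟨iso_mem hL0 u.2 hx hy, Fc_neg hL0 u hx hy⟩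

lemma Fc_iota (hL0 : L 0 = 0) (p : ReducedVertex k r L) :
    Fc hL0 (iota hL0 p) = Sum.inl ((reducedGraph k r L).connectedComponentMk p) := by
  by_cases hx : p.1.1 ∈ SB k r L
  · rw [Fc_pos1 hL0 (iota hL0 p) hx]
    refine congrArg _ (congrArg _ (Subtype.ext ?_))
    rcases p.2 with ⟨e0, _, _, _⟩ | ⟨e0, _, _, _⟩
    · exact Prod.ext rfl e0.symm
    · exfalso
      rw [e0] at hx
      exact zero_not_mem_SB hx
  · have hre : p.1.1 = 0 ∧ 1 ≤ p.1.2 ∧ p.1.2 ≤ k ∧ r ≤ L p.1.2 := by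
      rcases p.2 with ⟨_, a, b, c⟩ | ⟨a, b, c, d⟩
      · exact absurd (mem_SB.mpr ⟨a, b, c⟩) hx
      · exact ⟨a, b, c, d⟩
    have hy : p.1.2 ∈ SB k r L := mem_SB.mpr ⟨hre.2.1, hre.2.2.1, hre.2.2.2⟩
    rw [Fc_pos2 hL0 (iota hL0 p) hx hy]
    exact congrArg _ (congrArg _ (Subtype.ext (Prod.ext hre.1.symm rfl)))

lemma model_cc_card (hL0 : L 0 = 0) (hLpos : ∀ i, 1 ≤ i → i ≤ k → 0 < L i) :
    Nat.card (modelGraph k r L).ConnectedComponent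
      = Nat.card (reducedGraph k r L).ConnectedComponent + (IsoF k r L).card := by
  haveI := finite_model (k := k) (r := r) (L := L)
  haveI := finite_reduced (k := k) (r := r) (L := L)
  haveI : Finite ((modelGraph k r L).ConnectedComponent) := Quot.finite _
  haveI : Finite ((reducedGraph k r L).ConnectedComponent) := Quot.finite _
  have hbij : Function.Bijective
      (SimpleGraph.ConnectedComponent.lift (G := modelGraph k r L) (Fc hL0)
        (fun _ _ w _ => Fc_walk hL0 w)) := by
    constructor
    · refine SimpleGraph.ConnectedComponent.ind₂ ?_
      intro u v h
      simp only [SimpleGraph.ConnectedComponent.lift_mk] at h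
      rcases Fc_spec hL0 u with ⟨p, e1, r1⟩ | ⟨m1, e1⟩ <;>
        rcases Fc_spec hL0 v with ⟨q, e2, r2⟩ | ⟨m2, e2⟩ <;>
        rw [e1, e2] at h
      · have hpq := SimpleGraph.ConnectedComponent.eq.mp (Sum.inl.inj h)
        exact SimpleGraph.ConnectedComponent.eq.mpr
          (r1.trans ((reach_iota hL0 hLpos hpq).trans r2.symm))
      · exact absurd h (by simp)
      · exact absurd h (by simp)
      · injection h with h'
        have hv : u.1 = v.1 := congrArg (fun t : ↥(IsoF k r L) => t.val) h'
        have huv : u = v := Subtype.ext hv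
        rw [huv]
    · rintro (c | ⟨q, hq⟩)
      · obtain ⟨p, rfl⟩ : ∃ p, (reducedGraph k r L).connectedComponentMk p = c :=
          c.exists_rep
        exact ⟨(modelGraph k r L).connectedComponentMk (iota hL0 p), Fc_iota hL0 p⟩
      · have hq' := mem_IsoF.mp hq
        refine ⟨(modelGraph k r L).connectedComponentMk
          ⟨q, isModel_of_mem_Inn hq'.1⟩, ?_⟩
        show Fc hL0 ⟨q, isModel_of_mem_Inn hq'.1⟩ = Sum.inr ⟨q, hq⟩
        exact Fc_neg hL0 (⟨q, isModel_of_mem_Inn hq'.1⟩ : ModelVertex k r L) hq'.2.1 hq'.2.2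
  rw [Nat.card_congr (Equiv.ofBijective _ hbij), Nat.card_sum, Nat.card_eq_finsetCard]

end EulerAux

/-- the reduced graph and the model graph have the same Euler characteristic
`e − v + c`. -/
theorem reduced_euler_eq_model_euler (k : ℕ) (hk : 4 ≤ k) (r : ℝ) (hr : 0 < r)
    (L : ℕ → ℝ) (hL0 : L 0 = 0) (hLpos : ∀ i, 1 ≤ i → i ≤ k → 0 < L i) :
    (Nat.card (reducedGraph k r L).edgeSet : ℤ) - (Nat.card (ReducedVertex k r L) : ℤ)
      + (Nat.card (reducedGraph k r L).ConnectedComponent : ℤ)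
    = (Nat.card (modelGraph k r L).edgeSet : ℤ) - (Nat.card (ModelVertex k r L) : ℤ)
      + (Nat.card (modelGraph k r L).ConnectedComponent : ℤ) := by
  have h1 := EulerAux.model_edge_card (k := k) (r := r) (L := L) hL0 hLpos
  have h2 := EulerAux.reduced_edge_card (k := k) (r := r) (L := L)
  have h3 := EulerAux.model_vertex_card (k := k) (r := r) (L := L) hL0
  have h4 := EulerAux.model_cc_card (k := k) (r := r) (L := L) hL0 hLpos
  have h5 := EulerAux.inn_card_split (k := k) (r := r) (L := L) hLpos
  have h6 := EulerAux.edge_card_split (k := k) (r := r) (L := L) hLpos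
  rw [h1, h2, h3, h4]
  push_cast
  omega
end
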